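/- arXiv:2212.05257 — 2 statements merged into one kernel-verified Lean document; each statement's English description precedes it below -/
import Mathlib

section
/- Fix N > 0 and Υ > 0. The family R₁ = { h : [0,T] → H : h(t) = ∫₀^t B(τ, r(τ)) ψ(τ) dτ, where r : [0,T] → V is measurable with sup_{t∈[0,T]} ‖r(t)‖_H ≤ N and ψ ∈ L²([0,T];H) with ∫₀^T ‖ψ(τ)‖_H² dτ ≤ 2Υ }, regarded as a subset of C([0,T];V*) with the supremum norm, is relatively compact in C([0,T];V*). -/
open MeasureTheory Filter Topology

/-- Schauder-type lemma: the image of a ball in `H` under the "transpose" map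
`x ↦ (innerSL x).comp i` of a compact operator `i` has compact closure in `Dual V`. -/
theorem aux_schauder {V H : Type*}
    [NormedAddCommGroup V] [NormedSpace ℝ V]
    [NormedAddCommGroup H] [InnerProductSpace ℝ H] [CompleteSpace H]
    (i : V →L[ℝ] H) (hi_cpt : IsCompactOperator i) (M : ℝ) :
    IsCompact (closure ((fun x : H => ((innerSL ℝ x).comp i : StrongDual ℝ V)) ''
      Metric.closedBall 0 M)) := by
  set j : H → StrongDual ℝ V := fun x => ((innerSL ℝ x).comp i) with hj
  have hjsub : ∀ x y : H, j x - j y = j (x - y) := by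
    intro x y; ext v; simp [j, inner_sub_left]
  rcases lt_or_ge M 0 with hM | hM
  · simp [Metric.closedBall_eq_empty.mpr hM]
  -- key: bound the dual norm by the sup over the compact set K0
  have hK0 : IsCompact (closure (⇑i '' Metric.closedBall 0 1)) :=
    hi_cpt.isCompact_closure_image_closedBall 1
  set K0 := closure (⇑i '' Metric.closedBall 0 1) with hK0def
  have hkey : ∀ (u : H) (c : ℝ), 0 ≤ c → (∀ h ∈ K0, |inner ℝ u h| ≤ c) → ‖j u‖ ≤ c := by
    intro u c hc hsup
    refine ContinuousLinearMap.opNorm_le_bound _ hc ?_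
    intro v
    rcases eq_or_ne v 0 with rfl | hv
    · simp
    · have hv' : ‖v‖⁻¹ • v ∈ Metric.closedBall (0:V) 1 := by
        simp [norm_smul, abs_of_nonneg, inv_mul_cancel₀ (norm_ne_zero_iff.mpr hv)]
      have hmem : i (‖v‖⁻¹ • v) ∈ K0 := subset_closure ⟨_, hv', rfl⟩
      have h1 := hsup _ hmem
      have h2 : (inner ℝ u (i v) : ℝ) = ‖v‖ * inner ℝ u (i (‖v‖⁻¹ • v)) := by
        rw [_root_.map_smul, inner_smul_right, ← mul_assoc,
          mul_inv_cancel₀ (norm_ne_zero_iff.mpr hv), one_mul]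
      have : |(inner ℝ u (i v) : ℝ)| ≤ c * ‖v‖ := by
        rw [h2, abs_mul, abs_of_nonneg (norm_nonneg v)]
        calc ‖v‖ * |(inner ℝ u (i (‖v‖⁻¹ • v)) : ℝ)| ≤ ‖v‖ * c :=
              mul_le_mul_of_nonneg_left h1 (norm_nonneg v)
          _ = c * ‖v‖ := mul_comm _ _
      calc ‖(j u) v‖ = |(inner ℝ u (i v) : ℝ)| := by rw [hj]; exact (Real.norm_eq_abs _).symm ▸ rfl
        _ ≤ c * ‖v‖ := this
  have hTB : TotallyBounded (j '' Metric.closedBall 0 M) := by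
    rw [Metric.totallyBounded_iff]
    intro ε hε
    set δ := ε / 3 / (2 * M + 1) with hδdef
    have hδ : 0 < δ := by positivity
    obtain ⟨t0, ht0fin, ht0⟩ := Metric.totallyBounded_iff.mp hK0.totallyBounded δ hδ
    haveI : Fintype ↥t0 := ht0fin.fintype
    set Φ : H → (↥t0 → ℝ) := fun x k => inner ℝ x (k : H) with hΦ
    obtain ⟨C0, hC0⟩ : ∃ C : ℝ, ∀ k : ↥t0, ‖(k : H)‖ ≤ C := Finite.exists_le _
    set C := max C0 0 with hCdef
    have hC : ∀ k : ↥t0, ‖(k : H)‖ ≤ C := fun k => (hC0 k).trans (le_max_left _ _)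
    have hCnn : 0 ≤ C := le_max_right _ _
    have hΦball : Φ '' Metric.closedBall 0 M ⊆ Metric.closedBall 0 (M * C + 1) := by
      rintro _ ⟨x, hx, rfl⟩
      rw [Metric.mem_closedBall] at hx ⊢
      have hxn : ‖x‖ ≤ M := by simpa using hx
      rw [dist_pi_le_iff (by positivity)]
      intro k
      have : |(inner ℝ x (k : H) : ℝ)| ≤ M * C := by
        calc |(inner ℝ x (k:H) : ℝ)| ≤ ‖x‖ * ‖(k:H)‖ := abs_real_inner_le_norm _ _
          _ ≤ M * C := mul_le_mul hxn (hC k) (norm_nonneg _) hM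
      simpa [Φ, Real.dist_eq] using this.trans (by linarith)
    have hΦTB : TotallyBounded (Φ '' Metric.closedBall 0 M) :=
      (isCompact_closedBall (0 : ↥t0 → ℝ) (M * C + 1)).totallyBounded.subset hΦball
    obtain ⟨t1, ht1sub, ht1fin, ht1⟩ :=
      totallyBounded_iff_subset.mp hΦTB _ (Metric.dist_mem_uniformity (by positivity : (0:ℝ) < ε/3))
    have hsel : ∀ y : ↥t0 → ℝ, ∃ x : H, x ∈ Metric.closedBall (0:H) M ∧ (y ∈ t1 → Φ x = y) := by
      intro y
      by_cases hy : y ∈ t1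
      · obtain ⟨x, hx, hxy⟩ := ht1sub hy
        exact ⟨x, hx, fun _ => hxy⟩
      · exact ⟨0, Metric.mem_closedBall_self hM, fun h => absurd h hy⟩
    choose sel hsel1 hsel2 using hsel
    refine ⟨(j ∘ sel) '' t1, ht1fin.image _, ?_⟩
    rintro _ ⟨x0, hx0, rfl⟩
    have hx0n : ‖x0‖ ≤ M := by simpa using hx0
    obtain ⟨y, hyt1, hy⟩ : ∃ y ∈ t1, (Φ x0, y) ∈ {p : (↥t0 → ℝ) × (↥t0 → ℝ) | dist p.1 p.2 < ε/3} := by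
      have := ht1 ⟨x0, hx0, rfl⟩
      simpa using this
    set x1 := sel y with hx1def
    have hx1Φ : Φ x1 = y := hsel2 y hyt1
    have hx1n : ‖x1‖ ≤ M := by simpa using hsel1 y
    have hcoord : ∀ k : ↥t0, |(inner ℝ (x0 - x1) (k:H) : ℝ)| < ε/3 := by
      intro k
      have hdist : dist (Φ x0) (Φ x1) < ε/3 := by rw [hx1Φ]; exact hy
      have := (dist_pi_lt_iff (by positivity : (0:ℝ) < ε/3)).mp hdist k
      simpa [Φ, Real.dist_eq, inner_sub_left] using this
    have hsup : ∀ h ∈ K0, |(inner ℝ (x0 - x1) h : ℝ)| ≤ 2 * (ε/3) := by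
      intro h hh
      obtain ⟨k, hkt0, hk⟩ : ∃ k ∈ t0, h ∈ Metric.ball k δ := by
        have := ht0 hh; simpa using this
      have h1 : |(inner ℝ (x0 - x1) (k:H) : ℝ)| < ε/3 := hcoord ⟨k, hkt0⟩
      have h2 : |(inner ℝ (x0 - x1) (h - k) : ℝ)| ≤ (2*M) * δ := by
        calc |(inner ℝ (x0 - x1) (h - k) : ℝ)| ≤ ‖x0 - x1‖ * ‖h - k‖ := abs_real_inner_le_norm _ _
          _ ≤ (2*M) * δ := by
              refine mul_le_mul ?_ ?_ (norm_nonneg _) (by linarith)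
              · calc ‖x0 - x1‖ ≤ ‖x0‖ + ‖x1‖ := norm_sub_le _ _
                  _ ≤ 2*M := by linarith
              · have := Metric.mem_ball.mp hk
                rw [dist_eq_norm] at this
                exact this.le
      have h3 : (2*M) * δ ≤ ε/3 := by
        rw [hδdef, ← mul_div_assoc, div_le_iff₀ (by linarith : (0:ℝ) < 2*M+1)]
        nlinarith [hε.le]
      have : (inner ℝ (x0 - x1) h : ℝ) = inner ℝ (x0 - x1) (k:H) + inner ℝ (x0 - x1) (h - k) := by
        rw [inner_sub_right]; ring
      rw [this]
      calc |(inner ℝ (x0-x1) (k:H) : ℝ) + inner ℝ (x0-x1) (h-k)| ≤ _ + _ := abs_add_le _ _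
        _ ≤ 2 * (ε/3) := by linarith
    have hnorm : ‖j x0 - j x1‖ ≤ 2 * (ε/3) := by
      rw [hjsub]
      exact hkey _ _ (by positivity) hsup
    refine Set.mem_iUnion₂.mpr ⟨j x1, ⟨y, hyt1, rfl⟩, ?_⟩
    rw [Metric.mem_ball, dist_eq_norm]
    calc ‖j x0 - j x1‖ ≤ 2 * (ε/3) := hnorm
      _ < ε := by linarith
  have : TotallyBounded (closure (j '' Metric.closedBall 0 M)) := hTB.closure
  exact this.isCompact_of_isClosed isClosed_closure

set_option maxHeartbeats 2000000 in
/-- the family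
`R₁ = { t ↦ ∫₀^t B(τ, r(τ)) ψ(τ) dτ : sup_t ‖r(t)‖_H ≤ N, ∫₀^T ‖ψ‖_H² ≤ 2Υ }`,
viewed inside `C([0,T];V*)` via the embedding `H ⊂ V*` of the Gelfand triple, is
relatively compact in `C([0,T];V*)`. -/
theorem statement17 {V H : Type*}
    [NormedAddCommGroup V] [NormedSpace ℝ V] [CompleteSpace V]
    [MeasurableSpace V] [BorelSpace V]
    [NormedAddCommGroup H] [InnerProductSpace ℝ H] [CompleteSpace H]
    -- the Gelfand triple: `i : V → H` continuous, dense, injective and compact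
    (i : V →L[ℝ] H) (hi_inj : Function.Injective i) (hi_dense : DenseRange i)
    (hi_cpt : IsCompactOperator i)
    (T : ℝ) (hT : 0 < T)
    (b : ℝ → ℝ) (hb0 : ∀ t, 0 ≤ b t) (hb : IntegrableOn b (Set.Icc 0 T))
    (B : ℝ → V → (H →L[ℝ] H))
    -- operator-norm bound on `B` (implied by (H.5))
    (hB : ∀ᵐ t ∂(volume.restrict (Set.Icc (0:ℝ) T)), ∀ x : V,
      ‖B t x‖ ≤ Real.sqrt (b t * (1 + ‖i x‖ ^ 2)))
    (N Υ : ℝ) (hN : 0 < N) (hΥ : 0 < Υ) :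
    IsCompact (closure
      {F : C(Set.Icc (0:ℝ) T, StrongDual ℝ V) |
        ∃ (r : ℝ → V) (ψ : ℝ → H),
          Measurable r ∧ (∀ t ∈ Set.Icc (0:ℝ) T, ‖i (r t)‖ ≤ N) ∧
          MemLp ψ 2 (volume.restrict (Set.Icc (0:ℝ) T)) ∧
          (∫ τ in Set.Icc (0:ℝ) T, ‖ψ τ‖ ^ 2) ≤ 2 * Υ ∧
          ∀ t : Set.Icc (0:ℝ) T,
            F t = ((innerSL ℝ (∫ τ in Set.Icc (0:ℝ) (t : ℝ), (B τ (r τ)) (ψ τ))).comp i)}) := by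
  set X := Set.Icc (0:ℝ) T
  set j : H → StrongDual ℝ V := fun x => ((innerSL ℝ x).comp i) with hjdef
  have hjsub : ∀ x y : H, j x - j y = j (x - y) := by
    intro x y; ext v; simp [j, inner_sub_left]
  have hjnorm : ∀ x : H, ‖j x‖ ≤ ‖i‖ * ‖x‖ := by
    intro x
    refine ContinuousLinearMap.opNorm_le_bound _ (by positivity) ?_
    intro v
    calc ‖(j x) v‖ = |(inner ℝ x (i v) : ℝ)| := rfl
      _ ≤ ‖x‖ * ‖i v‖ := abs_real_inner_le_norm _ _
      _ ≤ ‖x‖ * (‖i‖ * ‖v‖) := by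
          exact mul_le_mul_of_nonneg_left (i.le_opNorm v) (norm_nonneg x)
      _ = ‖i‖ * ‖x‖ * ‖v‖ := by ring
  -- the integrable dominating data
  set β : ℝ → ℝ := fun τ => b τ * (1 + N ^ 2) with hβdef
  have hβ0 : ∀ τ, 0 ≤ β τ := fun τ => mul_nonneg (hb0 τ) (by positivity)
  have hβint : IntegrableOn β (Set.Icc 0 T) := hb.mul_const _
  set g : ℝ → ℝ := fun t => ∫ τ in Set.Icc 0 t, β τ with hgdef
  have hgcont : ContinuousOn g (Set.Icc 0 T) := intervalIntegral.continuousOn_primitive_Icc hβint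
  have hdisj : ∀ s t : ℝ, Disjoint (Set.Icc 0 s) (Set.Ioc s t) := by
    intro s t
    refine Set.disjoint_left.mpr ?_
    intro x hx hx'
    exact absurd hx.2 (not_le.mpr hx'.1)
  have hgsplit : ∀ s t : ℝ, 0 ≤ s → s ≤ t → t ≤ T →
      g t - g s = ∫ τ in Set.Ioc s t, β τ := by
    intro s t h0 hst htT
    have hunion : Set.Icc 0 s ∪ Set.Ioc s t = Set.Icc 0 t := Set.Icc_union_Ioc_eq_Icc h0 hst
    have h1 : IntegrableOn β (Set.Icc 0 s) :=
      hβint.mono_set (Set.Icc_subset_Icc_right (hst.trans htT))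
    have h2 : IntegrableOn β (Set.Ioc s t) :=
      hβint.mono_set ((Set.Ioc_subset_Icc_self).trans (Set.Icc_subset_Icc h0 htT))
    have := setIntegral_union (hdisj s t) measurableSet_Ioc h1 h2 (f := β)
    rw [hunion] at this
    simp only [hgdef]
    rw [this]
    ring
  have hg0 : ∀ s t : ℝ, 0 ≤ s → s ≤ t → t ≤ T → g s ≤ g t := by
    intro s t h0 hst htT
    have := hgsplit s t h0 hst htT
    have h2 : 0 ≤ ∫ τ in Set.Ioc s t, β τ :=
      setIntegral_nonneg measurableSet_Ioc fun τ _ => hβ0 τ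
    linarith
  have hgT : ∀ t ∈ Set.Icc (0:ℝ) T, g t ≤ g T := by
    intro t ht
    exact hg0 t T ht.1 ht.2 le_rfl
  have hgnn : ∀ t ∈ Set.Icc (0:ℝ) T, 0 ≤ g t := by
    intro t ht
    exact setIntegral_nonneg measurableSet_Icc fun τ _ => hβ0 τ
  set M : ℝ := Real.sqrt (g T) * Real.sqrt (2*Υ) with hMdef
  have hQcpt : IsCompact (closure (j '' Metric.closedBall 0 M)) := aux_schauder i hi_cpt M
  set Q := closure (j '' Metric.closedBall 0 M) with hQdef
  set ρ : X → X → ℝ := fun u v => ‖i‖ * (Real.sqrt (2*Υ) * Real.sqrt |g u - g v|) with hρdef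
  -- small ρ on small neighborhoods
  have hρnn : ∀ u v : X, 0 ≤ ρ u v := by
    intro u v; positivity
  have hρsymm : ∀ u v : X, ρ u v = ρ v u := by
    intro u v; simp only [hρdef, abs_sub_comm]
  have hρsmall : ∀ (x₀ : X) (ε : ℝ), 0 < ε → ∃ U ∈ 𝓝 x₀, ∀ x ∈ U, ρ x x₀ < ε := by
    intro x₀ ε hε
    set C := ‖i‖ * Real.sqrt (2*Υ) with hCdef
    have hC : 0 ≤ C := by positivity
    set η := (ε / (C+1))^2 with hηdef
    have hη : 0 < η := by positivity
    have hgc : Continuous (fun x : X => g (x : ℝ)) := by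
      have := hgcont.restrict
      exact this
    have hev : ∀ᶠ (x : X) in 𝓝 x₀, dist (g (x:ℝ)) (g (x₀:ℝ)) < η :=
      Metric.tendsto_nhds.mp (hgc.continuousAt) η hη
    refine ⟨_, hev, ?_⟩
    intro x hx
    have h1 : |g (x:ℝ) - g (x₀:ℝ)| < η := by rw [← Real.dist_eq]; exact hx
    have h2 : Real.sqrt |g (x:ℝ) - g (x₀:ℝ)| ≤ ε / (C+1) := by
      rw [hηdef] at h1
      calc Real.sqrt |g (x:ℝ) - g (x₀:ℝ)| ≤ Real.sqrt ((ε/(C+1))^2) :=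
            Real.sqrt_le_sqrt h1.le
        _ = ε / (C+1) := Real.sqrt_sq (by positivity)
    calc ρ x x₀ = C * Real.sqrt |g (x:ℝ) - g (x₀:ℝ)| := by
          simp only [hρdef, hCdef]; ring
      _ ≤ C * (ε/(C+1)) := mul_le_mul_of_nonneg_left h2 hC
      _ < ε := by
          rw [mul_div_assoc']
          rw [div_lt_iff₀ (by linarith)]
          nlinarith
  set K : Set C(X, StrongDual ℝ V) :=
    {φ | (∀ x, φ x ∈ Q) ∧ ∀ u v, ‖φ u - φ v‖ ≤ ρ u v} with hKdef
  have hmodcont : ∀ (f : X → StrongDual ℝ V),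
      (∀ u v, ‖f u - f v‖ ≤ ρ u v) → Continuous f := by
    intro f hf
    rw [continuous_iff_continuousAt]
    intro x₀
    rw [ContinuousAt, Metric.tendsto_nhds]
    intro ε hε
    obtain ⟨U, hU, hUρ⟩ := hρsmall x₀ ε hε
    filter_upwards [hU] with x hx
    rw [dist_eq_norm]
    exact lt_of_le_of_lt (hf x x₀) (hUρ x hx)
  have hKcpt : IsCompact K := by
    refine ArzelaAscoli.isCompact_of_equicontinuous K ?_ ?_
    · -- the image is a closed subset of a compact product
      have himg : ContinuousMap.toFun '' K =
          {f : X → StrongDual ℝ V | (∀ x, f x ∈ Q) ∧ ∀ u v, ‖f u - f v‖ ≤ ρ u v} := by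
        ext f
        constructor
        · rintro ⟨φ, hφ, rfl⟩
          exact hφ
        · rintro ⟨h1, h2⟩
          exact ⟨⟨f, hmodcont f h2⟩, ⟨h1, h2⟩, rfl⟩
      rw [himg]
      have hclosed : IsClosed {f : X → StrongDual ℝ V |
          (∀ x, f x ∈ Q) ∧ ∀ u v, ‖f u - f v‖ ≤ ρ u v} := by
        have e : {f : X → StrongDual ℝ V | (∀ x, f x ∈ Q) ∧ ∀ u v, ‖f u - f v‖ ≤ ρ u v}
            = (⋂ x, {f : X → StrongDual ℝ V | f x ∈ Q}) ∩
              ⋂ u, ⋂ v, {f : X → StrongDual ℝ V | ‖f u - f v‖ ≤ ρ u v} := by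
          ext f
          simp [Set.mem_iInter]
        rw [e]
        refine IsClosed.inter (isClosed_iInter fun x => ?_)
          (isClosed_iInter fun u => isClosed_iInter fun v => ?_)
        · exact isClosed_closure.preimage (continuous_apply x)
        · exact isClosed_le (((continuous_apply u).sub (continuous_apply v)).norm)
            continuous_const
      refine IsCompact.of_isClosed_subset (isCompact_univ_pi fun _ : X => hQcpt) hclosed ?_
      intro f hf
      exact Set.mem_univ_pi.mpr fun x => hf.1 x
    · -- equicontinuity
      intro x₀
      rw [Metric.equicontinuousAt_iff_right]
      intro ε hε
      obtain ⟨U, hU, hUρ⟩ := hρsmall x₀ ε hε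
      filter_upwards [hU] with x hx φ
      rw [dist_comm, dist_eq_norm]
      exact lt_of_le_of_lt (φ.2.2 x x₀) (hUρ x hx)
  have hsub : {F : C(X, StrongDual ℝ V) |
        ∃ (r : ℝ → V) (ψ : ℝ → H),
          Measurable r ∧ (∀ t ∈ Set.Icc (0:ℝ) T, ‖i (r t)‖ ≤ N) ∧
          MemLp ψ 2 (volume.restrict (Set.Icc (0:ℝ) T)) ∧
          (∫ τ in Set.Icc (0:ℝ) T, ‖ψ τ‖ ^ 2) ≤ 2 * Υ ∧
          ∀ t : X, F t = j (∫ τ in Set.Icc (0:ℝ) (t : ℝ), (B τ (r τ)) (ψ τ))} ⊆ K := by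
    rintro F ⟨r, ψ, hrm, hr, hψ, hψ2, hFt⟩
    set f : ℝ → H := fun τ => (B τ (r τ)) (ψ τ) with hfdef
    set h : ℝ → H := fun t => ∫ τ in Set.Icc 0 t, f τ with hhdef
    have hF : ∀ t : X, F t = j (h (t:ℝ)) := hFt
    set G : ℝ → ℝ := fun τ => Real.sqrt (β τ) * ‖ψ τ‖ with hGdef
    have hβaesm : AEStronglyMeasurable β (volume.restrict (Set.Icc 0 T)) :=
      hβint.aestronglyMeasurable
    have hsqrtβ : MemLp (fun τ => Real.sqrt (β τ)) 2 (volume.restrict (Set.Icc 0 T)) := by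
      have haesm : AEStronglyMeasurable (fun τ => Real.sqrt (β τ))
          (volume.restrict (Set.Icc 0 T)) :=
        Real.continuous_sqrt.comp_aestronglyMeasurable hβaesm
      rw [memLp_two_iff_integrable_sq haesm]
      refine hβint.congr (Eventually.of_forall fun τ => ?_)
      exact (Real.sq_sqrt (hβ0 τ)).symm
    have hψn : MemLp (fun τ => ‖ψ τ‖) 2 (volume.restrict (Set.Icc 0 T)) := hψ.norm
    have hψsq : Integrable (fun τ => ‖ψ τ‖^2) (volume.restrict (Set.Icc 0 T)) := by
      have := hψn.integrable_sq
      exact this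
    have hGint : IntegrableOn G (Set.Icc 0 T) := by
      refine Integrable.mono' ((hβint.add hψsq).div_const 2)
        (hsqrtβ.aestronglyMeasurable.mul hψn.aestronglyMeasurable)
        (Eventually.of_forall fun τ => ?_)
      have h1 : Real.sqrt (β τ) ^ 2 = β τ := Real.sq_sqrt (hβ0 τ)
      have h2 : 0 ≤ Real.sqrt (β τ) * ‖ψ τ‖ :=
        mul_nonneg (Real.sqrt_nonneg _) (norm_nonneg _)
      rw [Real.norm_of_nonneg h2]
      show Real.sqrt (β τ) * ‖ψ τ‖ ≤ (β τ + ‖ψ τ‖ ^ 2) / 2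
      nlinarith [sq_nonneg (Real.sqrt (β τ) - ‖ψ τ‖)]
    have hfboundae : ∀ᵐ τ ∂(volume.restrict (Set.Icc 0 T)), ‖f τ‖ ≤ G τ := by
      filter_upwards [hB, ae_restrict_mem measurableSet_Icc] with τ hτB hτmem
      have h1 : ‖B τ (r τ)‖ ≤ Real.sqrt (b τ * (1 + ‖i (r τ)‖^2)) := hτB (r τ)
      have h2 : b τ * (1 + ‖i (r τ)‖^2) ≤ β τ := by
        have h3 : ‖i (r τ)‖ ≤ N := hr τ hτmem
        have h4 : ‖i (r τ)‖^2 ≤ N^2 := by nlinarith [norm_nonneg (i (r τ))]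
        simp only [hβdef]
        nlinarith [hb0 τ]
      calc ‖f τ‖ ≤ ‖B τ (r τ)‖ * ‖ψ τ‖ := ContinuousLinearMap.le_opNorm _ _
        _ ≤ Real.sqrt (β τ) * ‖ψ τ‖ :=
            mul_le_mul_of_nonneg_right (h1.trans (Real.sqrt_le_sqrt h2)) (norm_nonneg _)
    have hconj : Real.HolderConjugate 2 2 := by constructor <;> norm_num
    have h2eq : ENNReal.ofReal (2:ℝ) = 2 := by norm_num
    have hCS : ∀ s : Set ℝ, s ⊆ Set.Icc 0 T →
        ∫ τ in s, G τ ≤ Real.sqrt (∫ τ in s, β τ) * Real.sqrt (2*Υ) := by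
      intro s hs
      have hle : volume.restrict s ≤ volume.restrict (Set.Icc 0 T) :=
        Measure.restrict_mono hs le_rfl
      have h1 : MemLp (fun τ => Real.sqrt (β τ)) (ENNReal.ofReal 2) (volume.restrict s) := by
        rw [h2eq]; exact hsqrtβ.mono_measure hle
      have h2 : MemLp (fun τ => ‖ψ τ‖) (ENNReal.ofReal 2) (volume.restrict s) := by
        rw [h2eq]; exact hψn.mono_measure hle
      calc ∫ τ in s, G τ
          ≤ (∫ τ in s, Real.sqrt (β τ) ^ (2:ℝ)) ^ (1/(2:ℝ)) *
            (∫ τ in s, ‖ψ τ‖ ^ (2:ℝ)) ^ (1/(2:ℝ)) :=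
            integral_mul_le_Lp_mul_Lq_of_nonneg hconj
              (Eventually.of_forall fun τ => Real.sqrt_nonneg _)
              (Eventually.of_forall fun τ => norm_nonneg _) h1 h2
        _ = Real.sqrt (∫ τ in s, β τ) * Real.sqrt (∫ τ in s, ‖ψ τ‖^2) := by
            rw [← Real.sqrt_eq_rpow, ← Real.sqrt_eq_rpow]
            congr 2
            · refine integral_congr_ae (Eventually.of_forall fun τ => ?_)
              show Real.sqrt (β τ) ^ (2:ℝ) = β τ
              rw [Real.rpow_two, Real.sq_sqrt (hβ0 τ)]
            · refine integral_congr_ae (Eventually.of_forall fun τ => ?_)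
              show ‖ψ τ‖ ^ (2:ℝ) = ‖ψ τ‖ ^ (2:ℕ)
              rw [Real.rpow_two]
        _ ≤ Real.sqrt (∫ τ in s, β τ) * Real.sqrt (2*Υ) := by
            refine mul_le_mul_of_nonneg_left ?_ (Real.sqrt_nonneg _)
            refine Real.sqrt_le_sqrt ?_
            calc ∫ τ in s, ‖ψ τ‖^2
                ≤ ∫ τ in Set.Icc 0 T, ‖ψ τ‖^2 :=
                  setIntegral_mono_set hψsq (Eventually.of_forall fun τ => sq_nonneg _)
                    (HasSubset.Subset.eventuallyLE hs)
              _ ≤ 2*Υ := hψ2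
    have hnormint : ∀ s : Set ℝ, s ⊆ Set.Icc 0 T →
        ‖∫ τ in s, f τ‖ ≤ Real.sqrt (∫ τ in s, β τ) * Real.sqrt (2*Υ) := by
      intro s hs
      calc ‖∫ τ in s, f τ‖ ≤ ∫ τ in s, ‖f τ‖ := norm_integral_le_integral_norm _
        _ ≤ ∫ τ in s, G τ :=
            integral_mono_of_nonneg (Eventually.of_forall fun τ => norm_nonneg _)
              (hGint.mono_set hs) (ae_restrict_of_ae_restrict_of_subset hs hfboundae)
        _ ≤ _ := hCS s hs
    have hhM : ∀ t : X, ‖h (t:ℝ)‖ ≤ M := by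
      intro t
      have hsub' : Set.Icc 0 (t:ℝ) ⊆ Set.Icc 0 T := Set.Icc_subset_Icc_right t.2.2
      calc ‖h (t:ℝ)‖ ≤ Real.sqrt (∫ τ in Set.Icc 0 (t:ℝ), β τ) * Real.sqrt (2*Υ) :=
            hnormint _ hsub'
        _ ≤ M := by
            rw [hMdef]
            refine mul_le_mul_of_nonneg_right ?_ (Real.sqrt_nonneg _)
            exact Real.sqrt_le_sqrt (hgT (t:ℝ) t.2)
    have hQmem : ∀ t : X, F t ∈ Q := by
      intro t
      rw [hF t]
      exact subset_closure ⟨h (t:ℝ),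
        by simpa [Metric.mem_closedBall, dist_eq_norm] using hhM t, rfl⟩
    have hinc : ∀ u v : X, (u:ℝ) ≤ (v:ℝ) → IntegrableOn f (Set.Icc 0 (v:ℝ)) →
        ‖h (v:ℝ) - h (u:ℝ)‖ ≤ Real.sqrt (g (v:ℝ) - g (u:ℝ)) * Real.sqrt (2*Υ) := by
      intro u v huv hint
      have h0u : 0 ≤ (u:ℝ) := u.2.1
      have hvT : (v:ℝ) ≤ T := v.2.2
      have hIocsub : Set.Ioc (u:ℝ) (v:ℝ) ⊆ Set.Icc 0 T :=
        fun τ hτ => ⟨h0u.trans hτ.1.le, hτ.2.trans hvT⟩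
      have hsplit : h (v:ℝ) - h (u:ℝ) = ∫ τ in Set.Ioc (u:ℝ) (v:ℝ), f τ := by
        have hunion : Set.Icc 0 (u:ℝ) ∪ Set.Ioc (u:ℝ) (v:ℝ) = Set.Icc 0 (v:ℝ) :=
          Set.Icc_union_Ioc_eq_Icc h0u huv
        have h1 : IntegrableOn f (Set.Icc 0 (u:ℝ)) :=
          hint.mono_set (Set.Icc_subset_Icc_right huv)
        have h2 : IntegrableOn f (Set.Ioc (u:ℝ) (v:ℝ)) :=
          hint.mono_set (fun τ hτ => ⟨h0u.trans hτ.1.le, hτ.2⟩)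
        have := setIntegral_union (hdisj (u:ℝ) (v:ℝ)) measurableSet_Ioc h1 h2 (f := f)
        rw [hunion] at this
        simp only [hhdef]
        rw [this]
        abel
      rw [hsplit]
      calc ‖∫ τ in Set.Ioc (u:ℝ) (v:ℝ), f τ‖
          ≤ Real.sqrt (∫ τ in Set.Ioc (u:ℝ) (v:ℝ), β τ) * Real.sqrt (2*Υ) :=
            hnormint _ hIocsub
        _ = Real.sqrt (g (v:ℝ) - g (u:ℝ)) * Real.sqrt (2*Υ) := by
            rw [hgsplit (u:ℝ) (v:ℝ) h0u huv hvT]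
    have hmod : ∀ u v : X, (u:ℝ) ≤ (v:ℝ) → ‖F v - F u‖ ≤ ρ u v := by
      intro u v huv
      have hgd : 0 ≤ g (v:ℝ) - g (u:ℝ) := by
        have := hg0 (u:ℝ) (v:ℝ) u.2.1 huv v.2.2
        linarith
      have hρeq : ρ u v = ‖i‖ * (Real.sqrt (2*Υ) * Real.sqrt (g (v:ℝ) - g (u:ℝ))) := by
        simp only [hρdef]
        rw [abs_sub_comm, abs_of_nonneg hgd]
      by_cases hvA : IntegrableOn f (Set.Icc 0 (v:ℝ))
      · rw [hF u, hF v, hjsub]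
        calc ‖j (h (v:ℝ) - h (u:ℝ))‖ ≤ ‖i‖ * ‖h (v:ℝ) - h (u:ℝ)‖ := hjnorm _
          _ ≤ ‖i‖ * (Real.sqrt (g (v:ℝ) - g (u:ℝ)) * Real.sqrt (2*Υ)) :=
              mul_le_mul_of_nonneg_left (hinc u v huv hvA) (norm_nonneg (i : V →L[ℝ] H))
          _ = ρ u v := by rw [hρeq]; ring
      · have hFv : F v = 0 := by
          rw [hF v]
          have hz : h (v:ℝ) = 0 := integral_undef hvA
          rw [hz]
          ext w
          simp [j]
        by_cases huA : IntegrableOn f (Set.Icc 0 (u:ℝ))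
        · -- the supremum of the integrability region
          set A := {t : ℝ | t ∈ Set.Icc 0 T ∧ IntegrableOn f (Set.Icc 0 t)} with hAdef
          have hAne : (u:ℝ) ∈ A := ⟨u.2, huA⟩
          have hAboundv : ∀ a ∈ A, a ≤ (v:ℝ) := by
            intro a ha
            by_contra hav
            push_neg at hav
            exact hvA (ha.2.mono_set (Set.Icc_subset_Icc_right hav.le))
          have hAbdd : BddAbove A := ⟨(v:ℝ), hAboundv⟩
          set c := sSup A with hcdef
          have huc : (u:ℝ) ≤ c := le_csSup hAbdd hAne
          have hcv : c ≤ (v:ℝ) := csSup_le ⟨_, hAne⟩ hAboundv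
          have hcmem : c ∈ Set.Icc 0 T := ⟨u.2.1.trans huc, hcv.trans v.2.2⟩
          set xc : X := ⟨c, hcmem⟩ with hxcdef
          have hnotA : ∀ w : ℝ, c < w → w ∉ A := fun w hw hwA =>
            absurd (le_csSup hAbdd hwA) (not_le.mpr hw)
          have hFc : F xc = 0 := by
            by_cases hcA : IntegrableOn f (Set.Icc 0 c)
            · -- approximate from the right by points where F vanishes
              have hcltv : c < (v:ℝ) := by
                rcases lt_or_eq_of_le hcv with hlt | heq
                · exact hlt
                · exact absurd (heq ▸ hcA) hvA
              have hnorm_le : ∀ ε > 0, ‖F xc‖ ≤ ε := by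
                intro ε hε
                obtain ⟨δ, hδpos, hδ⟩ :=
                  Metric.continuousAt_iff.mp (F.continuous.continuousAt (x := xc)) ε hε
                set w := min (c + δ/2) (v:ℝ) with hwdef
                have hcw : c < w := lt_min (by linarith) hcltv
                have hwmem : w ∈ Set.Icc 0 T :=
                  ⟨hcmem.1.trans hcw.le, (min_le_right _ _).trans v.2.2⟩
                set xw : X := ⟨w, hwmem⟩ with hxwdef
                have hdist : dist xw xc < δ := by
                  rw [Subtype.dist_eq]
                  have : |w - c| = w - c := abs_of_nonneg (by linarith)
                  rw [Real.dist_eq, this]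
                  have : w - c ≤ δ/2 := by
                    have := min_le_left (c + δ/2) (v:ℝ)
                    simp only [hwdef] at *
                    linarith [min_le_left (c + δ/2) (v:ℝ)]
                  linarith
                have hwnA : ¬ IntegrableOn f (Set.Icc 0 w) := fun hint =>
                  (hnotA w hcw) ⟨hwmem, hint⟩
                have hFw : F xw = 0 := by
                  rw [hF xw]
                  have hz : h w = 0 := integral_undef hwnA
                  rw [hz]
                  ext z
                  simp [j]
                have := hδ hdist
                rw [hFw, dist_eq_norm, zero_sub, norm_neg] at this
                exact this.le
              have : ‖F xc‖ ≤ 0 := le_of_forall_pos_le_add (by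
                intro ε hε
                simpa using hnorm_le ε hε)
              simpa [norm_le_zero_iff] using this
            · rw [hF xc]
              have hz : h c = 0 := integral_undef hcA
              rw [hz]
              ext z
              simp [j]
          have hkey : ∀ ε > 0, ‖F v - F u‖ ≤ ρ u v + ε := by
            intro ε hε
            obtain ⟨δ, hδpos, hδ⟩ :=
              Metric.continuousAt_iff.mp (F.continuous.continuousAt (x := xc)) ε hε
            obtain ⟨a, haA, ha1⟩ :=
              exists_lt_of_lt_csSup ⟨_, hAne⟩ (show c - δ/2 < c by linarith)
            set a' := max a (u:ℝ) with ha'def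
            have ha'A : a' ∈ A := by
              rcases le_total a (u:ℝ) with hle | hle
              · rw [ha'def, max_eq_right hle]; exact hAne
              · rw [ha'def, max_eq_left hle]; exact haA
            have hua' : (u:ℝ) ≤ a' := le_max_right _ _
            have ha'c : a' ≤ c := max_le (le_csSup hAbdd haA) huc
            have ha'close : c - δ/2 < a' := lt_of_lt_of_le ha1 (le_max_left _ _)
            set xa : X := ⟨a', ha'A.1⟩ with hxadef
            have hdist : dist xa xc < δ := by
              rw [Subtype.dist_eq, Real.dist_eq]
              rw [abs_of_nonpos (by linarith : a' - c ≤ 0)]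
              linarith
            have hFa : ‖F xa‖ < ε := by
              have := hδ hdist
              rw [hFc, dist_eq_norm, sub_zero] at this
              exact this
            have hbound : ‖F xa - F u‖ ≤ ρ u v := by
              rw [hF u, hF xa, hjsub]
              have ha'v : a' ≤ (v:ℝ) := ha'c.trans hcv
              calc ‖j (h a' - h (u:ℝ))‖ ≤ ‖i‖ * ‖h a' - h (u:ℝ)‖ := hjnorm _
                _ ≤ ‖i‖ * (Real.sqrt (g a' - g (u:ℝ)) * Real.sqrt (2*Υ)) :=
                    mul_le_mul_of_nonneg_left (hinc u xa hua' ha'A.2)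
                      (norm_nonneg (i : V →L[ℝ] H))
                _ ≤ ‖i‖ * (Real.sqrt (g (v:ℝ) - g (u:ℝ)) * Real.sqrt (2*Υ)) := by
                    refine mul_le_mul_of_nonneg_left ?_ (norm_nonneg (i : V →L[ℝ] H))
                    refine mul_le_mul_of_nonneg_right ?_ (Real.sqrt_nonneg _)
                    refine Real.sqrt_le_sqrt ?_
                    have := hg0 a' (v:ℝ) (ha'A.1.1) ha'v v.2.2
                    linarith
                _ = ρ u v := by rw [hρeq]; ring
            calc ‖F v - F u‖ = ‖F u‖ := by rw [hFv, zero_sub, norm_neg]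
              _ ≤ ‖F u - F xa‖ + ‖F xa‖ := by
                  calc ‖F u‖ = ‖(F u - F xa) + F xa‖ := by congr 1; abel
                    _ ≤ ‖F u - F xa‖ + ‖F xa‖ := norm_add_le _ _
              _ ≤ ρ u v + ε := by
                  rw [norm_sub_rev]
                  exact add_le_add hbound hFa.le
          exact le_of_forall_pos_le_add hkey
        · have hFu : F u = 0 := by
            rw [hF u]
            have hz : h (u:ℝ) = 0 := integral_undef huA
            rw [hz]
            ext w
            simp [j]
          rw [hFu, hFv]
          simpa using hρnn u v
    refine ⟨hQmem, ?_⟩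
    intro u v
    rcases le_total (u:ℝ) (v:ℝ) with huv | hvu
    · rw [norm_sub_rev]
      exact hmod u v huv
    · rw [hρsymm]
      exact hmod v u hvu
  exact hKcpt.of_isClosed_subset isClosed_closure (closure_minimal hsub hKcpt.isClosed)
end

section
/- Fix N > 0 and Υ > 0. The family R₂ = { h : [0,T] → H : h(t) = ∫₀^t ∫_Z γ(τ, r(τ), z)(φ(τ,z) − 1) ν(dz) dτ, where r : [0,T] → V is measurable with sup_{t∈[0,T]} ‖r(t)‖_H ≤ N and φ ∈ S^Υ }, regarded as a subset of C([0,T];V*) with the supremum norm, is relatively compact in C([0,T];V*). -/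
open MeasureTheory Filter Topology
open scoped ENNReal

/-- The measure `λ_T ⊗ ν` on `Z_T = [0,T] × Z`. -/
noncomputable def nuT {Z : Type*} [MeasurableSpace Z] (T : ℝ) (ν : Measure Z) :
    Measure (ℝ × Z) := (volume.restrict (Set.Icc 0 T)).prod ν

/-- The set `S^Υ` of nonnegative measurable functions `g` on `(Z_T, ν_T)` with
`∫ ℓ(g) dν_T ≤ Υ`, where `ℓ(r) = r log r − r + 1`. -/
def entS {X : Type*} [MeasurableSpace X] (μ : Measure X) (Υ : ℝ) : Set (X → ℝ) :=
  {g | Measurable g ∧ (∀ x, 0 ≤ g x) ∧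
    ∫⁻ x, ENNReal.ofReal (g x * Real.log (g x) - g x + 1) ∂μ ≤ ENNReal.ofReal Υ}

/-- The class `𝓗_p` on `(Z_T, ν_T)`. -/
def memHp {X : Type*} [MeasurableSpace X] (μ : Measure X) (p : ℝ) (h : X → ℝ) : Prop :=
  Measurable h ∧ (∀ x, 0 ≤ h x) ∧
    ∃ δ > (0:ℝ), ∀ E : Set X, MeasurableSet E → μ E < ∞ →
      ∫⁻ x in E, ENNReal.ofReal (Real.exp (δ * h x ^ p)) ∂μ < ∞


set_option maxHeartbeats 1000000

section RealAux
open Real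

lemma ell_ge_sq {b : ℝ} (hb : 0 ≤ b) : (Real.sqrt b - 1)^2 ≤ b * Real.log b - b + 1 := by
  rcases eq_or_lt_of_le hb with h0 | hb
  · simp [← h0]
  · set u := Real.sqrt b with hu
    have hu0 : 0 < u := Real.sqrt_pos.2 hb
    have hub : u^2 = b := Real.sq_sqrt hb.le
    have hlog : Real.log b = 2 * Real.log u := by
      rw [← hub, Real.log_pow]; push_cast; ring
    have h2 : -Real.log u ≤ u⁻¹ - 1 := by
      have := Real.log_le_sub_one_of_pos (x := u⁻¹) (by positivity)
      rwa [Real.log_inv] at this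
    have key : u - 1 ≤ u * Real.log u := by
      nlinarith [mul_le_mul_of_nonneg_left h2 hu0.le, mul_inv_cancel₀ (ne_of_gt hu0)]
    rw [hlog]
    nlinarith [key, sq_nonneg (u-1)]

lemma ell_nonneg {b : ℝ} (hb : 0 ≤ b) : 0 ≤ b * Real.log b - b + 1 :=
  le_trans (sq_nonneg _) (ell_ge_sq hb)

lemma abs_sub_one_le {b : ℝ} (hb : 0 ≤ b) (hb4 : b ≤ 4) :
    |b - 1| ≤ 3 * Real.sqrt (b * Real.log b - b + 1) := by
  have h1 : |Real.sqrt b - 1| ≤ Real.sqrt (b * Real.log b - b + 1) := by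
    rw [← Real.sqrt_sq_eq_abs]
    exact Real.sqrt_le_sqrt (ell_ge_sq hb)
  have h2 : Real.sqrt b + 1 ≤ 3 := by
    have : Real.sqrt b ≤ 2 := by
      rw [show (2:ℝ) = Real.sqrt 4 by
        rw [show (4:ℝ) = 2^2 by norm_num, Real.sqrt_sq (by norm_num : (0:ℝ) ≤ 2)]]
      exact Real.sqrt_le_sqrt hb4
    linarith
  have h3 : |b - 1| = |Real.sqrt b - 1| * (Real.sqrt b + 1) := by
    have hbb : b - 1 = (Real.sqrt b - 1) * (Real.sqrt b + 1) := by
      have := Real.sq_sqrt hb; nlinarith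
    rw [hbb, abs_mul, abs_of_nonneg (show (0:ℝ) ≤ Real.sqrt b + 1 by positivity)]
  rw [h3]
  calc |Real.sqrt b - 1| * (Real.sqrt b + 1) ≤ Real.sqrt (b * Real.log b - b + 1) * 3 :=
        mul_le_mul h1 h2 (by positivity) (Real.sqrt_nonneg _)
    _ = 3 * Real.sqrt (b * Real.log b - b + 1) := by ring

lemma one_le_ell {b : ℝ} (hb : 4 ≤ b) : 1 ≤ b * Real.log b - b + 1 := by
  refine le_trans ?_ (ell_ge_sq (by linarith))
  have h2 : (2:ℝ) ≤ Real.sqrt b := by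
    rw [show (2:ℝ) = Real.sqrt 4 by
      rw [show (4:ℝ) = 2^2 by norm_num, Real.sqrt_sq (by norm_num : (0:ℝ) ≤ 2)]]
    exact Real.sqrt_le_sqrt hb
  nlinarith

lemma young_ineq {a b σ : ℝ} (ha : 0 ≤ a) (hb : 0 ≤ b) (hσ : 0 < σ) :
    a * b ≤ σ⁻¹ * ((b * Real.log b - b + 1) + (Real.exp (σ * a) - 1)) := by
  have key : (σ * a) * b ≤ (b * Real.log b - b + 1) + (Real.exp (σ * a) - 1) := by
    rcases eq_or_lt_of_le hb with h0 | hb0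
    · rw [← h0]
      have h1 : 1 ≤ Real.exp (σ * a) := Real.one_le_exp (by positivity)
      simp [Real.log_zero]
      linarith
    · have h1 : σ * a - Real.log b + 1 ≤ Real.exp (σ * a - Real.log b) := Real.add_one_le_exp _
      have h2 : Real.exp (σ * a - Real.log b) = Real.exp (σ * a) / b := by
        rw [Real.exp_sub, Real.exp_log hb0]
      rw [h2] at h1
      have h3 : b * (σ * a - Real.log b + 1) ≤ Real.exp (σ * a) := by
        rw [div_eq_mul_inv] at h1
        calc b * (σ * a - Real.log b + 1) ≤ b * (Real.exp (σ * a) * b⁻¹) :=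
              mul_le_mul_of_nonneg_left h1 hb0.le
          _ = Real.exp (σ * a) := by field_simp
      nlinarith
  calc a * b = σ⁻¹ * ((σ * a) * b) := by field_simp
    _ ≤ _ := mul_le_mul_of_nonneg_left key (by positivity)

lemma exp_sub_one_le {σ K x : ℝ} (hσ : 0 ≤ σ) (hx : 0 ≤ x) (hxK : x ≤ K) :
    Real.exp (σ * x) - 1 ≤ σ * Real.exp (σ * K) * x := by
  have h2 := Real.exp_pos (σ * x)
  have h1 : Real.exp (σ * x) - 1 ≤ σ * x * Real.exp (σ * x) := by
    have h0 := Real.add_one_le_exp (-(σ * x))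
    rw [Real.exp_neg] at h0
    nlinarith [mul_le_mul_of_nonneg_left h0 h2.le, mul_inv_cancel₀ (ne_of_gt h2)]
  have h3 : Real.exp (σ * x) ≤ Real.exp (σ * K) :=
    Real.exp_le_exp.2 (mul_le_mul_of_nonneg_left hxK hσ)
  nlinarith [mul_nonneg hσ hx]

lemma exp_le_of_large {σ δ K x : ℝ} (hσ : 0 ≤ σ) (hδ : 0 < δ) (hK : 1 ≤ K) (hx : K ≤ x) :
    Real.exp (σ * x) ≤ Real.exp ((σ + 2)^2 / (4 * δ)) / K^2 * Real.exp (δ * x^2) := by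
  have hx0 : 0 < x := lt_of_lt_of_le (by linarith) hx
  have h1 : x ≤ Real.exp x := by linarith [Real.add_one_le_exp x]
  have hx2 : x^2 ≤ Real.exp (2 * x) := by
    rw [show Real.exp (2*x) = Real.exp x * Real.exp x by rw [← Real.exp_add]; ring_nf]
    nlinarith
  have h2 : K^2 * Real.exp (σ * x) ≤ Real.exp ((σ + 2) * x) := by
    have hKx : K^2 ≤ x^2 := by nlinarith
    calc K^2 * Real.exp (σ * x) ≤ Real.exp (2*x) * Real.exp (σ * x) := by
          nlinarith [Real.exp_pos (σ * x)]
      _ = Real.exp ((σ + 2) * x) := by rw [← Real.exp_add]; ring_nf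
  have h3 : (σ + 2) * x ≤ (σ + 2)^2 / (4 * δ) + δ * x^2 := by
    set c := (σ + 2)^2 / (4 * δ) with hc
    have hc4 : (σ + 2)^2 = 4 * δ * c := by rw [hc]; field_simp
    nlinarith [sq_nonneg ((σ + 2) - 2 * δ * x), hδ, sq_nonneg x]
  have h5 : Real.exp ((σ+2)*x) ≤ Real.exp ((σ + 2)^2 / (4 * δ)) * Real.exp (δ * x^2) := by
    rw [← Real.exp_add]; exact Real.exp_le_exp.2 h3
  rw [div_mul_eq_mul_div, le_div_iff₀ (by positivity)]
  calc Real.exp (σ * x) * K^2 = K^2 * Real.exp (σ * x) := by ring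
    _ ≤ Real.exp ((σ + 2) * x) := h2
    _ ≤ _ := h5

end RealAux

section Key
variable {X : Type*} [MeasurableSpace X] {μ : Measure X}

lemma lintegral_cs (ν : Measure X) {f g : X → ℝ≥0∞} (hf : AEMeasurable f ν) (hg : AEMeasurable g ν) :
    ∫⁻ a, (f a) ^ (1/2:ℝ) * (g a) ^ (1/2:ℝ) ∂ν ≤
      (∫⁻ a, f a ∂ν) ^ (1/2:ℝ) * (∫⁻ a, g a ∂ν) ^ (1/2:ℝ) :=
  ENNReal.lintegral_mul_norm_pow_le hf hg (by norm_num) (by norm_num) (by norm_num)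

lemma ofReal_sq_rpow_half {a : ℝ} (ha : 0 ≤ a) :
    (ENNReal.ofReal (a^2)) ^ (1/2:ℝ) = ENNReal.ofReal a := by
  rw [ENNReal.ofReal_rpow_of_nonneg (sq_nonneg a) (by norm_num)]
  congr 1
  rw [← Real.rpow_natCast a 2, ← Real.rpow_mul ha]
  norm_num

lemma ofReal_rpow_half {a : ℝ} (ha : 0 ≤ a) :
    (ENNReal.ofReal a) ^ (1/2:ℝ) = ENNReal.ofReal (Real.sqrt a) := by
  rw [ENNReal.ofReal_rpow_of_nonneg ha (by norm_num), ← Real.sqrt_eq_rpow]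

/-- The key superexponential estimate. -/
lemma key_estimate (h : X → ℝ) (hmeas : Measurable h) (hpos : ∀ x, 0 ≤ h x)
    (δ : ℝ) (hδ : 0 < δ) (D : ℝ≥0∞)
    (hD : ∫⁻ q in {q | 1 < h q}, ENNReal.ofReal (Real.exp (δ * h q ^ 2)) ∂μ ≤ D)
    (Υ : ℝ) (hΥ0 : 0 ≤ Υ) (g : X → ℝ) (hg : g ∈ entS μ Υ)
    (E : Set X) (hEmeas : MeasurableSet E) (σ K : ℝ) (hσ : 1 ≤ σ) (hK : 1 ≤ K) :
    ∫⁻ q in E, ENNReal.ofReal (h q * |g q - 1|) ∂μ ≤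
      ENNReal.ofReal (3 + Real.exp (σ * K)) * (∫⁻ q in E, ENNReal.ofReal (h q ^ 2) ∂μ) ^ (1/2:ℝ)
          * ENNReal.ofReal (Real.sqrt Υ)
        + ENNReal.ofReal (Υ / σ)
        + ENNReal.ofReal (Real.exp ((σ + 2)^2 / (4 * δ)) / (σ * K ^ 2)) * D := by
  obtain ⟨hgmeas, hgpos, hgent⟩ := hg
  have hσ0 : (0:ℝ) < σ := by linarith
  set ℓg : X → ℝ := fun q => g q * Real.log (g q) - g q + 1 with hℓg
  have hℓmeas : Measurable ℓg := by
    exact (((hgmeas.mul (Real.measurable_log.comp hgmeas)).sub hgmeas).add measurable_const)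
  have hℓpos : ∀ q, 0 ≤ ℓg q := fun q => ell_nonneg (hgpos q)
  -- the entropy bound localized to any set
  have entloc : ∀ S : Set X, ∫⁻ q in S, ENNReal.ofReal (ℓg q) ∂μ ≤ ENNReal.ofReal Υ :=
    fun S => le_trans (setLIntegral_le_lintegral _ _) hgent
  set B : Set X := {q | 4 < g q} with hB
  have hBmeas : MeasurableSet B := measurableSet_lt measurable_const hgmeas
  -- measure of B is at most Υ
  have hμB : μ B ≤ ENNReal.ofReal Υ := by
    calc μ B = ∫⁻ q in B, 1 ∂μ := (setLIntegral_one B).symm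
      _ ≤ ∫⁻ q in B, ENNReal.ofReal (ℓg q) ∂μ := by
          refine setLIntegral_mono' hBmeas (fun q hq => ?_)
          rw [show (1:ℝ≥0∞) = ENNReal.ofReal 1 by simp]
          exact ENNReal.ofReal_le_ofReal (one_le_ell (le_of_lt hq))
      _ ≤ ENNReal.ofReal Υ := entloc B
  set Θ : ℝ≥0∞ := (∫⁻ q in E, ENNReal.ofReal (h q ^ 2) ∂μ) ^ (1/2:ℝ) with hΘ
  set sΥ : ℝ≥0∞ := ENNReal.ofReal (Real.sqrt Υ) with hsΥ
  -- sqrt-Υ equals the rpow of ofReal Υ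
  have hsΥ' : (ENNReal.ofReal Υ) ^ (1/2:ℝ) = sΥ := ofReal_rpow_half hΥ0
  -- Cauchy-Schwarz: ∫ h over any subset S of E with μ S ≤ Υ bound
  have CSh : ∀ S : Set X, MeasurableSet S → S ⊆ E → μ S ≤ ENNReal.ofReal Υ →
      ∫⁻ q in S, ENNReal.ofReal (h q) ∂μ ≤ Θ * sΥ := by
    intro S hSmeas hSE hSμ
    have : ∫⁻ q in S, ENNReal.ofReal (h q) ∂μ
        = ∫⁻ q in S, (ENNReal.ofReal (h q ^ 2)) ^ (1/2:ℝ) * (1:ℝ≥0∞) ^ (1/2:ℝ) ∂μ := by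
      refine lintegral_congr (fun q => ?_)
      rw [ofReal_sq_rpow_half (hpos q), ENNReal.one_rpow, mul_one]
    rw [this]
    calc ∫⁻ q in S, (ENNReal.ofReal (h q ^ 2)) ^ (1/2:ℝ) * (1:ℝ≥0∞) ^ (1/2:ℝ) ∂μ
        ≤ (∫⁻ q in S, ENNReal.ofReal (h q ^ 2) ∂μ) ^ (1/2:ℝ)
          * (∫⁻ _ in S, (1:ℝ≥0∞) ∂μ) ^ (1/2:ℝ) :=
          lintegral_cs _ ((ENNReal.measurable_ofReal.comp (hmeas.pow_const 2)).aemeasurable)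
            aemeasurable_const
      _ ≤ Θ * sΥ := by
          rw [setLIntegral_one, ← hsΥ']
          exact mul_le_mul' (ENNReal.rpow_le_rpow (lintegral_mono_set hSE) (by norm_num))
            (ENNReal.rpow_le_rpow hSμ (by norm_num))
  -- pointwise bound by two pieces
  have pointwise : ∀ q, ENNReal.ofReal (h q * |g q - 1|) ≤
      B.indicator (fun q => ENNReal.ofReal (h q * g q)) q
      + (fun q => ENNReal.ofReal (3 * (h q * Real.sqrt (ℓg q)))) q := by
    intro q
    by_cases hq : 4 < g q
    · rw [Set.indicator_of_mem (show q ∈ B from hq)]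
      refine le_add_right (ENNReal.ofReal_le_ofReal ?_)
      have : |g q - 1| ≤ g q := by
        rw [abs_le]; constructor <;> nlinarith [hgpos q]
      exact mul_le_mul_of_nonneg_left this (hpos q)
    · rw [Set.indicator_of_notMem (show q ∉ B from hq)]
      refine le_add_left (ENNReal.ofReal_le_ofReal ?_)
      push_neg at hq
      calc h q * |g q - 1| ≤ h q * (3 * Real.sqrt (ℓg q)) :=
            mul_le_mul_of_nonneg_left (abs_sub_one_le (hgpos q) hq) (hpos q)
        _ = 3 * (h q * Real.sqrt (ℓg q)) := by ring
  -- Term 1 : the small-g part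
  have term1 : ∫⁻ q in E, ENNReal.ofReal (3 * (h q * Real.sqrt (ℓg q))) ∂μ
      ≤ ENNReal.ofReal 3 * Θ * sΥ := by
    have step : ∀ q, ENNReal.ofReal (3 * (h q * Real.sqrt (ℓg q)))
        = ENNReal.ofReal 3 * ((ENNReal.ofReal (h q ^ 2)) ^ (1/2:ℝ)
            * (ENNReal.ofReal (ℓg q)) ^ (1/2:ℝ)) := by
      intro q
      rw [ENNReal.ofReal_mul (by norm_num), ENNReal.ofReal_mul (hpos q),
        ofReal_sq_rpow_half (hpos q), ofReal_rpow_half (hℓpos q)]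
    simp_rw [step]
    rw [lintegral_const_mul' _ _ (by simp)]
    rw [mul_assoc]
    refine mul_le_mul_right ?_ _
    calc ∫⁻ q in E, (ENNReal.ofReal (h q ^ 2)) ^ (1/2:ℝ) * (ENNReal.ofReal (ℓg q)) ^ (1/2:ℝ) ∂μ
        ≤ (∫⁻ q in E, ENNReal.ofReal (h q ^ 2) ∂μ) ^ (1/2:ℝ)
          * (∫⁻ q in E, ENNReal.ofReal (ℓg q) ∂μ) ^ (1/2:ℝ) :=
          lintegral_cs _ ((ENNReal.measurable_ofReal.comp (hmeas.pow_const 2)).aemeasurable)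
            ((ENNReal.measurable_ofReal.comp hℓmeas).aemeasurable)
      _ ≤ Θ * sΥ := by
          rw [← hsΥ']
          exact mul_le_mul_right (ENNReal.rpow_le_rpow (entloc E) (by norm_num)) _
  -- Term 2 : the large-g part
  have term2 : ∫⁻ q in E, B.indicator (fun q => ENNReal.ofReal (h q * g q)) q ∂μ
      ≤ ENNReal.ofReal (Υ / σ) + ENNReal.ofReal (Real.exp (σ * K)) * Θ * sΥ
        + ENNReal.ofReal (Real.exp ((σ + 2)^2 / (4 * δ)) / (σ * K ^ 2)) * D := by
    rw [lintegral_indicator hBmeas, Measure.restrict_restrict hBmeas]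
    set S := B ∩ E with hS
    have hSmeas : MeasurableSet S := hBmeas.inter hEmeas
    have hSB : S ⊆ B := Set.inter_subset_left
    have hSE : S ⊆ E := Set.inter_subset_right
    set C2 : ℝ := Real.exp ((σ + 2)^2 / (4 * δ)) / K^2 with hC2
    have hC2pos : 0 ≤ C2 := by positivity
    have expm : Measurable (fun q => ENNReal.ofReal (Real.exp (σ * h q) - 1)) :=
      ENNReal.measurable_ofReal.comp
        ((Real.measurable_exp.comp (hmeas.const_mul σ)).sub measurable_const)
    have young_pt : ∀ q, ENNReal.ofReal (h q * g q)
        ≤ ENNReal.ofReal σ⁻¹ * (ENNReal.ofReal (ℓg q)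
            + ENNReal.ofReal (Real.exp (σ * h q) - 1)) := by
      intro q
      rw [← ENNReal.ofReal_add (hℓpos q)
        (by linarith [Real.one_le_exp (mul_nonneg hσ0.le (hpos q))] : (0:ℝ) ≤ Real.exp (σ * h q) - 1),
        ← ENNReal.ofReal_mul (by positivity)]
      exact ENNReal.ofReal_le_ofReal (young_ineq (hpos q) (hgpos q) hσ0)
    -- split the exponential integral over S by {h ≤ K}
    set A : Set X := {q | h q ≤ K} with hA
    have hAmeas : MeasurableSet A := measurableSet_le hmeas measurable_const
    have split : ∫⁻ q in S, ENNReal.ofReal (Real.exp (σ * h q) - 1) ∂μ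
        = ∫⁻ q in A ∩ S, ENNReal.ofReal (Real.exp (σ * h q) - 1) ∂μ
          + ∫⁻ q in Aᶜ ∩ S, ENNReal.ofReal (Real.exp (σ * h q) - 1) ∂μ := by
      rw [← Measure.restrict_restrict hAmeas, ← Measure.restrict_restrict hAmeas.compl]
      exact (lintegral_add_compl _ hAmeas).symm
    have partA : ∫⁻ q in A ∩ S, ENNReal.ofReal (Real.exp (σ * h q) - 1) ∂μ
        ≤ ENNReal.ofReal (σ * Real.exp (σ * K)) * (Θ * sΥ) := by
      calc ∫⁻ q in A ∩ S, ENNReal.ofReal (Real.exp (σ * h q) - 1) ∂μ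
          ≤ ∫⁻ q in A ∩ S, ENNReal.ofReal (σ * Real.exp (σ * K)) * ENNReal.ofReal (h q) ∂μ := by
            refine setLIntegral_mono' (hAmeas.inter hSmeas) (fun q hq => ?_)
            rw [← ENNReal.ofReal_mul (by positivity)]
            exact ENNReal.ofReal_le_ofReal
              (by simpa [mul_assoc] using exp_sub_one_le hσ0.le (hpos q) hq.1)
        _ = ENNReal.ofReal (σ * Real.exp (σ * K)) * ∫⁻ q in A ∩ S, ENNReal.ofReal (h q) ∂μ :=
            lintegral_const_mul' _ _ (by simp)
        _ ≤ ENNReal.ofReal (σ * Real.exp (σ * K)) * (Θ * sΥ) := by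
            refine mul_le_mul_right ?_ _
            exact CSh (A ∩ S) (hAmeas.inter hSmeas)
              ((Set.inter_subset_right).trans hSE)
              (le_trans (measure_mono ((Set.inter_subset_right).trans hSB)) hμB)
    have partB : ∫⁻ q in Aᶜ ∩ S, ENNReal.ofReal (Real.exp (σ * h q) - 1) ∂μ
        ≤ ENNReal.ofReal C2 * D := by
      calc ∫⁻ q in Aᶜ ∩ S, ENNReal.ofReal (Real.exp (σ * h q) - 1) ∂μ
          ≤ ∫⁻ q in Aᶜ ∩ S, ENNReal.ofReal C2 * ENNReal.ofReal (Real.exp (δ * h q ^ 2)) ∂μ := by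
            refine setLIntegral_mono' (hAmeas.compl.inter hSmeas) (fun q hq => ?_)
            rw [← ENNReal.ofReal_mul hC2pos]
            refine ENNReal.ofReal_le_ofReal ?_
            have hKq : K ≤ h q := le_of_lt (lt_of_not_ge hq.1)
            have := exp_le_of_large hσ0.le hδ hK hKq
            linarith [this]
        _ = ENNReal.ofReal C2 * ∫⁻ q in Aᶜ ∩ S, ENNReal.ofReal (Real.exp (δ * h q ^ 2)) ∂μ :=
            lintegral_const_mul' _ _ (by simp)
        _ ≤ ENNReal.ofReal C2 * D := by
            refine mul_le_mul_right (le_trans (lintegral_mono_set ?_) hD) _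
            intro q hq
            have hKq : K < h q := lt_of_not_ge hq.1
            exact lt_of_le_of_lt hK hKq
    have e1 : ENNReal.ofReal σ⁻¹ * ENNReal.ofReal Υ = ENNReal.ofReal (Υ / σ) := by
      rw [← ENNReal.ofReal_mul (inv_nonneg.2 hσ0.le), inv_mul_eq_div]
    have e2 : ENNReal.ofReal σ⁻¹ * (ENNReal.ofReal (σ * Real.exp (σ * K)) * (Θ * sΥ))
        = ENNReal.ofReal (Real.exp (σ * K)) * Θ * sΥ := by
      rw [← mul_assoc, ← ENNReal.ofReal_mul (inv_nonneg.2 hσ0.le),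
        show σ⁻¹ * (σ * Real.exp (σ * K)) = Real.exp (σ * K) by field_simp, mul_assoc]
    have e3 : ENNReal.ofReal σ⁻¹ * (ENNReal.ofReal C2 * D)
        = ENNReal.ofReal (Real.exp ((σ + 2)^2 / (4 * δ)) / (σ * K ^ 2)) * D := by
      rw [← mul_assoc, ← ENNReal.ofReal_mul (inv_nonneg.2 hσ0.le)]
      congr 2
      rw [hC2]
      field_simp
    calc ∫⁻ q in S, ENNReal.ofReal (h q * g q) ∂μ
        ≤ ∫⁻ q in S, ENNReal.ofReal σ⁻¹ * (ENNReal.ofReal (ℓg q)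
            + ENNReal.ofReal (Real.exp (σ * h q) - 1)) ∂μ := lintegral_mono young_pt
      _ = ENNReal.ofReal σ⁻¹ * (∫⁻ q in S, ENNReal.ofReal (ℓg q) ∂μ
            + ∫⁻ q in S, ENNReal.ofReal (Real.exp (σ * h q) - 1) ∂μ) := by
          rw [lintegral_const_mul' _ _ (by simp),
            lintegral_add_left (show Measurable fun q => ENNReal.ofReal (ℓg q) from
              ENNReal.measurable_ofReal.comp hℓmeas)]
      _ ≤ ENNReal.ofReal σ⁻¹ * (ENNReal.ofReal Υ
            + (ENNReal.ofReal (σ * Real.exp (σ * K)) * (Θ * sΥ) + ENNReal.ofReal C2 * D)) := by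
          refine mul_le_mul_right (add_le_add (entloc S) ?_) _
          rw [split]
          exact add_le_add partA partB
      _ = ENNReal.ofReal (Υ / σ) + ENNReal.ofReal (Real.exp (σ * K)) * Θ * sΥ
            + ENNReal.ofReal (Real.exp ((σ + 2)^2 / (4 * δ)) / (σ * K ^ 2)) * D := by
          rw [mul_add, mul_add, e1, e2, e3]
          ring
  calc ∫⁻ q in E, ENNReal.ofReal (h q * |g q - 1|) ∂μ
      ≤ ∫⁻ q in E, (B.indicator (fun q => ENNReal.ofReal (h q * g q)) q
          + ENNReal.ofReal (3 * (h q * Real.sqrt (ℓg q)))) ∂μ := lintegral_mono pointwise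
    _ = ∫⁻ q in E, B.indicator (fun q => ENNReal.ofReal (h q * g q)) q ∂μ
          + ∫⁻ q in E, ENNReal.ofReal (3 * (h q * Real.sqrt (ℓg q))) ∂μ :=
        lintegral_add_left ((ENNReal.measurable_ofReal.comp (hmeas.mul hgmeas)).indicator hBmeas) _
    _ ≤ (ENNReal.ofReal (Υ / σ) + ENNReal.ofReal (Real.exp (σ * K)) * Θ * sΥ
          + ENNReal.ofReal (Real.exp ((σ + 2)^2 / (4 * δ)) / (σ * K ^ 2)) * D)
          + ENNReal.ofReal 3 * Θ * sΥ := add_le_add term2 term1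
    _ = _ := by
        rw [ENNReal.ofReal_add (by norm_num) (Real.exp_nonneg _)]
        ring



/-- Uniform boundedness over `entS`. -/
lemma key_bound (h : X → ℝ) (hmeas : Measurable h) (hpos : ∀ x, 0 ≤ h x)
    (δ : ℝ) (hδ : 0 < δ) (D : ℝ≥0∞)
    (hD : ∫⁻ q in {q | 1 < h q}, ENNReal.ofReal (Real.exp (δ * h q ^ 2)) ∂μ ≤ D)
    (hDfin : D ≠ ∞) (hsq : ∫⁻ q, ENNReal.ofReal (h q ^ 2) ∂μ ≠ ∞)
    (Υ : ℝ) (hΥ0 : 0 ≤ Υ) :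
    ∃ C : ℝ≥0∞, C ≠ ∞ ∧ ∀ g ∈ entS μ Υ, ∀ E : Set X, MeasurableSet E →
      ∫⁻ q in E, ENNReal.ofReal (h q * |g q - 1|) ∂μ ≤ C := by
  refine ⟨ENNReal.ofReal (3 + Real.exp 1) * (∫⁻ q, ENNReal.ofReal (h q ^ 2) ∂μ) ^ (1/2:ℝ)
      * ENNReal.ofReal (Real.sqrt Υ)
    + ENNReal.ofReal (Υ / 1)
    + ENNReal.ofReal (Real.exp ((1 + 2)^2 / (4 * δ)) / (1 * 1 ^ 2)) * D, ?_, ?_⟩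
  · refine ENNReal.add_ne_top.2 ⟨ENNReal.add_ne_top.2 ⟨?_, ENNReal.ofReal_ne_top⟩, ?_⟩
    · exact ENNReal.mul_ne_top (ENNReal.mul_ne_top ENNReal.ofReal_ne_top
        (ENNReal.rpow_lt_top_of_nonneg (by norm_num) hsq).ne) ENNReal.ofReal_ne_top
    · exact ENNReal.mul_ne_top ENNReal.ofReal_ne_top hDfin
  · intro g hg E hE
    refine le_trans (key_estimate h hmeas hpos δ hδ D hD Υ hΥ0 g hg E hE 1 1 le_rfl le_rfl) ?_
    have h1 : (1:ℝ) * 1 = 1 := one_mul 1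
    rw [h1]
    refine add_le_add (add_le_add ?_ le_rfl) le_rfl
    refine mul_le_mul' (mul_le_mul' le_rfl ?_) le_rfl
    exact ENNReal.rpow_le_rpow (setLIntegral_le_lintegral _ _) (by norm_num)

/-- Uniform smallness over `entS` on sets where `∫ h²` is small. -/
lemma key_small (h : X → ℝ) (hmeas : Measurable h) (hpos : ∀ x, 0 ≤ h x)
    (δ : ℝ) (hδ : 0 < δ) (D : ℝ≥0∞)
    (hD : ∫⁻ q in {q | 1 < h q}, ENNReal.ofReal (Real.exp (δ * h q ^ 2)) ∂μ ≤ D)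
    (hDfin : D ≠ ∞) (Υ : ℝ) (hΥ0 : 0 ≤ Υ) :
    ∀ ε > (0:ℝ), ∃ θ > (0:ℝ), ∀ g ∈ entS μ Υ, ∀ E : Set X, MeasurableSet E →
      ∫⁻ q in E, ENNReal.ofReal (h q ^ 2) ∂μ ≤ ENNReal.ofReal θ →
      ∫⁻ q in E, ENNReal.ofReal (h q * |g q - 1|) ∂μ ≤ ENNReal.ofReal ε := by
  intro ε hε
  set σ : ℝ := max 1 (3 * Υ / ε) with hσdef
  have hσ1 : 1 ≤ σ := le_max_left _ _
  have hσ0 : 0 < σ := lt_of_lt_of_le one_pos hσ1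
  have hΥσ : Υ / σ ≤ ε / 3 := by
    rw [div_le_div_iff₀ hσ0 (by norm_num)]
    have h1 : 3 * Υ / ε ≤ σ := le_max_right _ _
    calc Υ * 3 = (3 * Υ / ε) * ε := by field_simp
      _ ≤ σ * ε := mul_le_mul_of_nonneg_right h1 hε.le
      _ = ε * σ := by ring
  set Dr : ℝ := D.toReal with hDr
  have hDr0 : 0 ≤ Dr := ENNReal.toReal_nonneg
  have hDD : D = ENNReal.ofReal Dr := (ENNReal.ofReal_toReal hDfin).symm
  set cq : ℝ := Real.exp ((σ + 2)^2 / (4 * δ)) with hcq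
  have hcq0 : 0 < cq := Real.exp_pos _
  set K : ℝ := max 1 (Real.sqrt (3 * cq * (Dr + 1) / (σ * ε))) with hKdef
  have hK1 : 1 ≤ K := le_max_left _ _
  have hK0 : 0 < K := lt_of_lt_of_le one_pos hK1
  have hKsq : 3 * cq * (Dr + 1) / (σ * ε) ≤ K ^ 2 := by
    have h1 : Real.sqrt (3 * cq * (Dr + 1) / (σ * ε)) ≤ K := le_max_right _ _
    have h2 : 0 ≤ 3 * cq * (Dr + 1) / (σ * ε) := by positivity
    calc 3 * cq * (Dr + 1) / (σ * ε)
        = Real.sqrt (3 * cq * (Dr + 1) / (σ * ε)) ^ 2 := (Real.sq_sqrt h2).symm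
      _ ≤ K ^ 2 := by nlinarith [Real.sqrt_nonneg (3 * cq * (Dr + 1) / (σ * ε))]
  have hterm3 : ENNReal.ofReal (cq / (σ * K ^ 2)) * D ≤ ENNReal.ofReal (ε / 3) := by
    rw [hDD, ← ENNReal.ofReal_mul (by positivity)]
    refine ENNReal.ofReal_le_ofReal ?_
    rw [div_mul_eq_mul_div, div_le_div_iff₀ (by positivity) (by norm_num)]
    calc cq * Dr * 3 ≤ cq * (Dr + 1) * 3 := by nlinarith
      _ = (3 * cq * (Dr + 1) / (σ * ε)) * (σ * ε) := by field_simp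
      _ ≤ K ^ 2 * (σ * ε) := mul_le_mul_of_nonneg_right hKsq (by positivity)
      _ = ε * (σ * K ^ 2) := by ring
  set M : ℝ := 3 + Real.exp (σ * K) with hM
  have hM0 : 0 < M := by positivity
  set θ : ℝ := (ε / (3 * M * (Real.sqrt Υ + 1))) ^ 2 with hθdef
  have hθ0 : 0 < θ := by positivity
  refine ⟨θ, hθ0, fun g hg E hE hsmall => ?_⟩
  have hterm1 : ENNReal.ofReal M * (∫⁻ q in E, ENNReal.ofReal (h q ^ 2) ∂μ) ^ (1/2:ℝ)
      * ENNReal.ofReal (Real.sqrt Υ) ≤ ENNReal.ofReal (ε / 3) := by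
    have hΘ : (∫⁻ q in E, ENNReal.ofReal (h q ^ 2) ∂μ) ^ (1/2:ℝ)
        ≤ ENNReal.ofReal (ε / (3 * M * (Real.sqrt Υ + 1))) := by
      calc (∫⁻ q in E, ENNReal.ofReal (h q ^ 2) ∂μ) ^ (1/2:ℝ)
          ≤ (ENNReal.ofReal θ) ^ (1/2:ℝ) := ENNReal.rpow_le_rpow hsmall (by norm_num)
        _ = ENNReal.ofReal (ε / (3 * M * (Real.sqrt Υ + 1))) := by
            rw [ofReal_rpow_half hθ0.le, hθdef, Real.sqrt_sq (by positivity)]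
    calc ENNReal.ofReal M * (∫⁻ q in E, ENNReal.ofReal (h q ^ 2) ∂μ) ^ (1/2:ℝ)
        * ENNReal.ofReal (Real.sqrt Υ)
        ≤ ENNReal.ofReal M * ENNReal.ofReal (ε / (3 * M * (Real.sqrt Υ + 1)))
          * ENNReal.ofReal (Real.sqrt Υ) := by
          exact mul_le_mul' (mul_le_mul' le_rfl hΘ) le_rfl
      _ = ENNReal.ofReal (M * (ε / (3 * M * (Real.sqrt Υ + 1))) * Real.sqrt Υ) := by
          rw [← ENNReal.ofReal_mul hM0.le, ← ENNReal.ofReal_mul (by positivity)]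
      _ ≤ ENNReal.ofReal (ε / 3) := by
          refine ENNReal.ofReal_le_ofReal ?_
          rw [show M * (ε / (3 * M * (Real.sqrt Υ + 1))) * Real.sqrt Υ
              = ε * Real.sqrt Υ / (3 * (Real.sqrt Υ + 1)) by field_simp]
          rw [div_le_div_iff₀ (by positivity) (by norm_num)]
          nlinarith [Real.sqrt_nonneg Υ]
  refine le_trans (key_estimate h hmeas hpos δ hδ D hD Υ hΥ0 g hg E hE σ K hσ1 hK1) ?_
  calc ENNReal.ofReal M * (∫⁻ q in E, ENNReal.ofReal (h q ^ 2) ∂μ) ^ (1/2:ℝ)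
        * ENNReal.ofReal (Real.sqrt Υ)
      + ENNReal.ofReal (Υ / σ) + ENNReal.ofReal (cq / (σ * K ^ 2)) * D
      ≤ ENNReal.ofReal (ε / 3) + ENNReal.ofReal (ε / 3) + ENNReal.ofReal (ε / 3) :=
        add_le_add (add_le_add hterm1 (ENNReal.ofReal_le_ofReal hΥσ)) hterm3
    _ = ENNReal.ofReal ε := by
        rw [← ENNReal.ofReal_add (by positivity) (by positivity),
          ← ENNReal.ofReal_add (by positivity) (by positivity)]
        congr 1
        ring

end Key



section CJ

lemma compactJ {V H : Type*} [NormedAddCommGroup V] [NormedSpace ℝ V]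
    [NormedAddCommGroup H] [InnerProductSpace ℝ H]
    (i : V →L[ℝ] H) (hi : IsCompactOperator i) (C : ℝ) :
    IsCompact (closure ((fun x : H => ((innerSL ℝ x).comp i : StrongDual ℝ V)) ''
      Metric.closedBall 0 C)) := by
  set J : H → StrongDual ℝ V := fun x => ((innerSL ℝ x).comp i) with hJ
  have hJnorm : ∀ x y : H, ∀ v : V, (J x - J y) v = inner ℝ (x - y) (i v) := by
    intro x y v
    simp [hJ, inner_sub_left]
  suffices htb : TotallyBounded (J '' Metric.closedBall 0 C) by
    exact htb.closure.isCompact_of_isClosed isClosed_closure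
  rcases lt_or_ge C 0 with hC | hC
  · rw [Metric.closedBall_eq_empty.2 hC]
    simp [totallyBounded_empty]
  rw [Metric.totallyBounded_iff]
  intro ε hε
  obtain ⟨K, hKcpt, hKsub⟩ := IsCompactOperator.image_closedBall_subset_compact
    (f := (i : V →ₗ[ℝ] H)) hi 1
  have hKtb := hKcpt.totallyBounded
  rw [Metric.totallyBounded_iff] at hKtb
  set ε₁ : ℝ := ε / (8 * (C + 1)) with hε₁
  have hε₁pos : 0 < ε₁ := by positivity
  obtain ⟨t, htfin, htsub⟩ := hKtb ε₁ hε₁pos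
  classical
  set tf : Finset H := htfin.toFinset with htf
  -- bound on the norms of net points
  set B : ℝ := tf.sum (fun k => ‖k‖) with hBdef
  have hBb : ∀ k ∈ tf, ‖k‖ ≤ B := by
    intro k hk
    exact Finset.single_le_sum (f := fun k => ‖k‖) (fun j _ => norm_nonneg j) hk
  -- the finite-dimensional projection
  set Φ : H → (tf → ℝ) := fun x k => (inner ℝ x (k : H) : ℝ) with hΦ
  have hΦsub : Φ '' Metric.closedBall 0 C ⊆ Metric.closedBall 0 (C * B + 1) := by
    rintro y ⟨x, hx, rfl⟩
    rw [Metric.mem_closedBall, dist_zero_right]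
    have hBnn : 0 ≤ B := Finset.sum_nonneg (fun j _ => norm_nonneg j)
    refine (pi_norm_le_iff_of_nonneg (by positivity)).2 (fun k => ?_)
    have h1 : |(inner ℝ x (k : H) : ℝ)| ≤ ‖x‖ * ‖(k : H)‖ := abs_real_inner_le_norm _ _
    have h2 : ‖x‖ ≤ C := by simpa [Metric.mem_closedBall, dist_zero_right] using hx
    have h3 : ‖(k : H)‖ ≤ B := hBb k k.2
    have : ‖Φ x k‖ = |(inner ℝ x (k : H) : ℝ)| := by rw [Real.norm_eq_abs]
    rw [this]
    nlinarith [norm_nonneg x, norm_nonneg (k : H)]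
  have hΦtb : TotallyBounded (Φ '' Metric.closedBall 0 C) :=
    (isCompact_closedBall (0 : tf → ℝ) (C * B + 1)).totallyBounded.subset hΦsub
  rw [Metric.totallyBounded_iff] at hΦtb
  obtain ⟨u, hufin, husub⟩ := hΦtb (ε / 4) (by positivity)
  -- choose approximate preimages
  have choice : ∀ y ∈ u, ∃ x : H, (∃ x' ∈ Metric.closedBall (0:H) C, Φ x' ∈ Metric.ball y (ε/4)) →
      x ∈ Metric.closedBall (0:H) C ∧ Φ x ∈ Metric.ball y (ε/4) := by
    intro y _
    by_cases hy : ∃ x' ∈ Metric.closedBall (0:H) C, Φ x' ∈ Metric.ball y (ε/4)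
    · obtain ⟨x', hx1, hx2⟩ := hy
      exact ⟨x', fun _ => ⟨hx1, hx2⟩⟩
    · exact ⟨0, fun h => absurd h hy⟩
  choose picks hpicks using choice
  haveI := hufin.to_subtype
  refine ⟨J '' (Set.range (fun y : u => picks y y.2)), (Set.finite_range _).image _, ?_⟩
  rintro w ⟨x, hx, rfl⟩
  have hΦx : Φ x ∈ ⋃ y ∈ u, Metric.ball y (ε/4) := husub ⟨x, hx, rfl⟩
  rw [Set.mem_iUnion₂] at hΦx
  obtain ⟨y, hyu, hxy⟩ := hΦx
  set xj : H := picks y hyu with hxj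
  obtain ⟨hxjball, hxjy⟩ := hpicks y hyu ⟨x, hx, hxy⟩
  rw [Set.mem_iUnion₂]
  refine ⟨J xj, ⟨xj, ⟨⟨y, hyu⟩, rfl⟩, rfl⟩, ?_⟩
  rw [Metric.mem_ball, dist_eq_norm]
  -- key estimate on the operator norm
  have hcoord : ∀ k : tf, |(inner ℝ (x - xj) (k : H) : ℝ)| ≤ ε/2 := by
    intro k
    have h1 : dist (Φ x) (Φ xj) < ε/2 := by
      calc dist (Φ x) (Φ xj) ≤ dist (Φ x) y + dist y (Φ xj) := dist_triangle _ _ _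
        _ < ε/4 + ε/4 := add_lt_add hxy (by rw [dist_comm]; exact hxjy)
        _ = ε/2 := by ring
    have h2 : dist (Φ x k) (Φ xj k) ≤ dist (Φ x) (Φ xj) := dist_le_pi_dist _ _ _
    have h3 : dist (Φ x k) (Φ xj k) = |(inner ℝ (x - xj) (k : H) : ℝ)| := by
      rw [Real.dist_eq, inner_sub_left]
    linarith
  have hxxj : ‖x - xj‖ ≤ 2 * (C + 1) := by
    have h1 : ‖x‖ ≤ C := by simpa [Metric.mem_closedBall, dist_zero_right] using hx
    have h2 : ‖xj‖ ≤ C := by simpa [Metric.mem_closedBall, dist_zero_right] using hxjball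
    calc ‖x - xj‖ ≤ ‖x‖ + ‖xj‖ := norm_sub_le _ _
      _ ≤ 2 * (C + 1) := by linarith
  have hkey : ∀ v : V, ‖v‖ ≤ 1 → |(inner ℝ (x - xj) (i v) : ℝ)| ≤ 3 * ε / 4 := by
    intro v hv
    have hiv : i v ∈ K := hKsub ⟨v, by simpa [Metric.mem_closedBall, dist_zero_right] using hv, rfl⟩
    have := htsub hiv
    rw [Set.mem_iUnion₂] at this
    obtain ⟨k, hkt, hk⟩ := this
    have hktf : k ∈ tf := htfin.mem_toFinset.2 hkt
    have h1 : |(inner ℝ (x - xj) (i v - k) : ℝ)| ≤ ‖x - xj‖ * ‖i v - k‖ := abs_real_inner_le_norm _ _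
    have h2 : ‖i v - k‖ < ε₁ := by rwa [Metric.mem_ball, dist_eq_norm] at hk
    have h3 : |(inner ℝ (x - xj) (k : H) : ℝ)| ≤ ε/2 := hcoord ⟨k, hktf⟩
    have h4 : (inner ℝ (x - xj) (i v) : ℝ) = inner ℝ (x - xj) (i v - k) + inner ℝ (x - xj) k := by
      rw [← inner_add_right]
      congr 1
      abel
    have h5 : ‖x - xj‖ * ‖i v - k‖ ≤ 2 * (C + 1) * ε₁ := by
      have := norm_nonneg (i v - k)
      nlinarith [norm_nonneg (x - xj)]
    have h6 : 2 * (C + 1) * ε₁ = ε / 4 := by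
      rw [hε₁]; field_simp; ring
    calc |(inner ℝ (x - xj) (i v) : ℝ)|
        ≤ |(inner ℝ (x - xj) (i v - k) : ℝ)| + |(inner ℝ (x - xj) (k:H) : ℝ)| := by
          rw [h4]; exact abs_add_le _ _
      _ ≤ 3 * ε / 4 := by nlinarith
  have hop : ‖J x - J xj‖ ≤ 3 * ε / 4 := by
    refine ContinuousLinearMap.opNorm_le_bound _ (by positivity) (fun v => ?_)
    rcases eq_or_ne v 0 with rfl | hv
    · simp
    · have hnv : 0 < ‖v‖ := norm_pos_iff.2 hv
      set uu : V := ‖v‖⁻¹ • v with huu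
      have huu1 : ‖uu‖ ≤ 1 := by
        rw [huu, norm_smul, norm_inv, norm_norm, inv_mul_cancel₀ hnv.ne']
      have hvu : v = ‖v‖ • uu := by
        rw [huu, smul_smul, mul_inv_cancel₀ hnv.ne', one_smul]
      have hiuv : i v = ‖v‖ • i uu := by
        conv_lhs => rw [hvu]
        rw [ContinuousLinearMap.map_smul]
      have h1 : (J x - J xj) v = ‖v‖ * (inner ℝ (x - xj) (i uu) : ℝ) := by
        rw [hJnorm, hiuv, real_inner_smul_right]
      rw [Real.norm_eq_abs, h1, abs_mul, abs_of_nonneg (norm_nonneg v)]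
      calc ‖v‖ * |(inner ℝ (x - xj) (i uu) : ℝ)| ≤ ‖v‖ * (3 * ε / 4) :=
            mul_le_mul_of_nonneg_left (hkey uu huu1) (norm_nonneg v)
        _ = 3 * ε / 4 * ‖v‖ := by ring
  linarith

end CJ

section Ton
variable {Z : Type*} [MeasurableSpace Z] {T : ℝ} {ν : Measure Z} [SFinite ν]

lemma tonelli_slab (f : ℝ × Z → ℝ≥0∞) (hf : Measurable f) (A : Set ℝ) :
    ∫⁻ q in A ×ˢ Set.univ, f q ∂(nuT T ν)
      = ∫⁻ τ, (∫⁻ z, f (τ, z) ∂ν) ∂(((volume.restrict (Set.Icc 0 T)).restrict A)) := by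
  rw [nuT, ← Measure.prod_restrict, Measure.restrict_univ]
  exact lintegral_prod f hf.aemeasurable

lemma tonelli_slab' (f : ℝ × Z → ℝ≥0∞) (hf : Measurable f) (A : Set ℝ)
    (hA : MeasurableSet A) (hAT : A ⊆ Set.Icc 0 T) :
    ∫⁻ q in A ×ˢ Set.univ, f q ∂(nuT T ν)
      = ∫⁻ τ in A, (∫⁻ z, f (τ, z) ∂ν) ∂volume := by
  rw [tonelli_slab f hf A, Measure.restrict_restrict hA,
    Set.inter_eq_self_of_subset_left hAT]

lemma tonelli_total (f : ℝ × Z → ℝ≥0∞) (hf : Measurable f) :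
    ∫⁻ q, f q ∂(nuT T ν)
      = ∫⁻ τ, (∫⁻ z, f (τ, z) ∂ν) ∂(volume.restrict (Set.Icc 0 T)) := by
  have := tonelli_slab (T := T) (ν := ν) f hf Set.univ
  rwa [Set.univ_prod_univ, Measure.restrict_univ, Measure.restrict_univ] at this

/-- Uniform absolute continuity in the time variable. -/
lemma time_small (f : ℝ × Z → ℝ≥0∞) (hf : Measurable f)
    (hfin : ∫⁻ q, f q ∂(nuT T ν) ≠ ∞) :
    ∀ θ > (0:ℝ), ∃ η > (0:ℝ), ∀ s t : ℝ, t - s ≤ η →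
      ∫⁻ q in (Set.Ioc s t) ×ˢ Set.univ, f q ∂(nuT T ν) ≤ ENNReal.ofReal θ := by
  intro θ hθ
  rw [tonelli_total f hf] at hfin
  obtain ⟨d, hd0, hd⟩ := exists_pos_setLIntegral_lt_of_measure_lt hfin
    (ε := ENNReal.ofReal θ) (by simp [hθ])
  set m : ℝ≥0∞ := min d (ENNReal.ofReal 1) with hm
  have hm0 : m ≠ 0 := by
    simp only [hm, ne_eq, min_eq_iff]
    intro hc
    rcases hc with ⟨h1, -⟩ | ⟨h1, -⟩
    · exact hd0.ne' h1
    · simp at h1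
  have hmfin : m ≠ ∞ := by
    refine ne_of_lt (lt_of_le_of_lt (min_le_right _ _) ?_)
    exact ENNReal.ofReal_lt_top
  have hmtR : 0 < m.toReal := ENNReal.toReal_pos hm0 hmfin
  refine ⟨m.toReal / 2, by positivity, fun s t hst => ?_⟩
  rw [tonelli_slab f hf]
  refine le_of_lt (hd _ ?_)
  have h1 : (volume.restrict (Set.Icc (0:ℝ) T)) (Set.Ioc s t)
      = volume (Set.Ioc s t ∩ Set.Icc 0 T) := Measure.restrict_apply measurableSet_Ioc
  calc (volume.restrict (Set.Icc (0:ℝ) T)) (Set.Ioc s t)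
      ≤ volume (Set.Ioc s t) := by rw [h1]; exact measure_mono Set.inter_subset_left
    _ = ENNReal.ofReal (t - s) := Real.volume_Ioc
    _ ≤ ENNReal.ofReal (m.toReal / 2) := ENNReal.ofReal_le_ofReal hst
    _ < ENNReal.ofReal m.toReal := by
        rw [ENNReal.ofReal_lt_ofReal_iff hmtR]
        linarith
    _ = m := ENNReal.ofReal_toReal hmfin
    _ ≤ d := min_le_left _ _
end Ton


/-- the family
`R₂ = { t ↦ ∫₀^t ∫_Z γ(τ, r(τ), z)(φ(τ,z) − 1) ν(dz) dτ : sup_t ‖r(t)‖_H ≤ N, φ ∈ S^Υ }`,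
viewed inside `C([0,T];V*)` via the embedding `H ⊂ V*` of the Gelfand triple, is
relatively compact in `C([0,T];V*)`. -/
theorem statement18 {V H Z : Type*}
    [NormedAddCommGroup V] [NormedSpace ℝ V] [CompleteSpace V]
    [MeasurableSpace V] [BorelSpace V]
    [NormedAddCommGroup H] [InnerProductSpace ℝ H] [CompleteSpace H]
    [TopologicalSpace Z] [PolishSpace Z] [LocallyCompactSpace Z]
    [MeasurableSpace Z] [BorelSpace Z]
    -- the Gelfand triple: `i : V → H` continuous, dense, injective and compact
    (i : V →L[ℝ] H) (hi_inj : Function.Injective i) (hi_dense : DenseRange i)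
    (hi_cpt : IsCompactOperator i)
    (T : ℝ) (hT : 0 < T)
    (ν : Measure Z) [IsFiniteMeasureOnCompacts ν]
    (γ : ℝ → V → Z → H)
    (hγ_meas : StronglyMeasurable (fun q : ℝ × V × Z => γ q.1 q.2.1 q.2.2))
    (Lγ : ℝ × Z → ℝ)
    (hLγ_L2 : ∫⁻ q, ENNReal.ofReal (Lγ q ^ 2) ∂(nuT T ν) < ∞)
    (hLγ_H2 : memHp (nuT T ν) 2 Lγ)
    -- growth bound on `γ` (hypothesis (H.8))
    (hγ_bdd : ∀ᵐ t ∂(volume.restrict (Set.Icc (0:ℝ) T)), ∀ (x : V) (z : Z),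
      ‖γ t x z‖ ≤ Lγ (t, z) * (1 + ‖i x‖))
    (N Υ : ℝ) (hN : 0 < N) (hΥ : 0 < Υ) :
    IsCompact (closure
      {F : C(Set.Icc (0:ℝ) T, StrongDual ℝ V) |
        ∃ (r : ℝ → V) (φ : ℝ × Z → ℝ),
          Measurable r ∧ (∀ t ∈ Set.Icc (0:ℝ) T, ‖i (r t)‖ ≤ N) ∧
          φ ∈ entS (nuT T ν) Υ ∧
          ∀ t : Set.Icc (0:ℝ) T,
            F t = ((innerSL ℝ
              (∫ τ in Set.Icc (0:ℝ) (t : ℝ),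
                ∫ z, (φ (τ, z) - 1) • γ τ (r τ) z ∂ν)).comp i)}) := by
  classical
  haveI hcs : CompactSpace (Set.Icc (0:ℝ) T) := isCompact_iff_compactSpace.mp isCompact_Icc
  -- basic facts about the embedding `J : H → V*`
  have hJsub : ∀ a b : H, ((innerSL ℝ a).comp i) - ((innerSL ℝ b).comp i)
      = ((innerSL ℝ (a - b)).comp i) := by
    intro a b
    rw [map_sub, ContinuousLinearMap.sub_comp]
  have hJle : ∀ w : H, ‖(innerSL ℝ w).comp i‖ ≤ ‖i‖ * ‖w‖ := by
    intro w
    calc ‖(innerSL ℝ w).comp i‖ ≤ ‖innerSL ℝ w‖ * ‖i‖ := ContinuousLinearMap.opNorm_comp_le _ _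
      _ = ‖i‖ * ‖w‖ := by rw [innerSL_apply_norm]; ring
  -- the dominating function `h = (1+N) Lγ`
  obtain ⟨hLm, hLpos, δ0, hδ0, hδE⟩ := hLγ_H2
  have hc0 : (0:ℝ) < 1 + N := by linarith
  set h : ℝ × Z → ℝ := fun q => (1 + N) * Lγ q with hh
  have hmeas : Measurable h := hLm.const_mul _
  have hpos : ∀ q, 0 ≤ h q := fun q => mul_nonneg hc0.le (hLpos q)
  set δ : ℝ := δ0 / (1 + N)^2 with hδdef
  have hδ : 0 < δ := by positivity
  have hexp_eq : ∀ q, δ * h q ^ 2 = δ0 * Lγ q ^ (2:ℝ) := by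
    intro q
    rw [Real.rpow_two, hh, hδdef]
    field_simp
  have hsqm : Measurable fun q => ENNReal.ofReal (h q ^ 2) :=
    ENNReal.measurable_ofReal.comp (hmeas.pow_const 2)
  have Hsqfin : ∫⁻ q, ENNReal.ofReal (h q ^ 2) ∂(nuT T ν) ≠ ∞ := by
    have hpt : ∀ q, ENNReal.ofReal (h q ^ 2)
        = ENNReal.ofReal ((1 + N)^2) * ENNReal.ofReal (Lγ q ^ 2) := by
      intro q
      rw [← ENNReal.ofReal_mul (by positivity), hh]
      congr 1
      ring
    simp_rw [hpt]
    rw [lintegral_const_mul' _ _ (by simp)]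
    exact (ENNReal.mul_lt_top ENNReal.ofReal_lt_top hLγ_L2).ne
  -- the exponential tail integral `D`
  set Sh : Set (ℝ × Z) := {q | 1 < h q} with hSh
  have hShm : MeasurableSet Sh := measurableSet_lt measurable_const hmeas
  have hShfin : nuT T ν Sh < ∞ := by
    have : nuT T ν Sh ≤ ∫⁻ q, ENNReal.ofReal (h q ^ 2) ∂(nuT T ν) := by
      calc nuT T ν Sh = ∫⁻ _ in Sh, 1 ∂(nuT T ν) := (setLIntegral_one Sh).symm
        _ ≤ ∫⁻ q in Sh, ENNReal.ofReal (h q ^ 2) ∂(nuT T ν) := by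
            refine setLIntegral_mono' hShm (fun q hq => ?_)
            have h1q : (1:ℝ) < h q := hq
            rw [show (1:ℝ≥0∞) = ENNReal.ofReal 1 by simp]
            exact ENNReal.ofReal_le_ofReal (by nlinarith)
        _ ≤ ∫⁻ q, ENNReal.ofReal (h q ^ 2) ∂(nuT T ν) := setLIntegral_le_lintegral _ _
    exact lt_of_le_of_lt this (lt_top_iff_ne_top.2 Hsqfin)
  set D : ℝ≥0∞ := ∫⁻ q in Sh, ENNReal.ofReal (Real.exp (δ * h q ^ 2)) ∂(nuT T ν) with hDdef
  have hDfin : D ≠ ∞ := by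
    rw [hDdef]
    have heq : ∀ q, ENNReal.ofReal (Real.exp (δ * h q ^ 2))
        = ENNReal.ofReal (Real.exp (δ0 * Lγ q ^ (2:ℝ))) := fun q => by rw [hexp_eq q]
    simp_rw [heq]
    exact (hδE Sh hShm hShfin).ne
  -- uniform bound and uniform smallness from the key estimates
  obtain ⟨C, hCfin, hCbnd⟩ := key_bound (μ := nuT T ν) h hmeas hpos δ hδ D hDdef.ge hDfin
    Hsqfin Υ hΥ.le
  -- master estimate for admissible witnesses
  have master : ∀ (r : ℝ → V) (φ : ℝ × Z → ℝ), Measurable r →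
      (∀ t ∈ Set.Icc (0:ℝ) T, ‖i (r t)‖ ≤ N) → φ ∈ entS (nuT T ν) Υ →
      ∀ A : Set ℝ, MeasurableSet A → A ⊆ Set.Icc (0:ℝ) T →
        ‖∫ τ in A, (∫ z, (φ (τ, z) - 1) • γ τ (r τ) z ∂ν) ∂volume‖
          ≤ (∫⁻ q in A ×ˢ Set.univ, ENNReal.ofReal (h q * |φ q - 1|) ∂(nuT T ν)).toReal
        ∧ IntegrableOn (fun τ => ∫ z, (φ (τ, z) - 1) • γ τ (r τ) z ∂ν) A volume := by
    intro r φ hrm hrN hφ A hA hAT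
    obtain ⟨hφm, hφpos, hφent⟩ := hφ
    have hΨm : StronglyMeasurable (fun q : ℝ × Z => (φ q - 1) • γ q.1 (r q.1) q.2) := by
      have h1 : Measurable (fun q : ℝ × Z => (q.1, r q.1, q.2)) :=
        measurable_fst.prodMk ((hrm.comp measurable_fst).prodMk measurable_snd)
      exact ((hφm.sub measurable_const).stronglyMeasurable).smul (hγ_meas.comp_measurable h1)
    have hGsm : StronglyMeasurable (fun τ => ∫ z, (φ (τ, z) - 1) • γ τ (r τ) z ∂ν) := by
      exact MeasureTheory.StronglyMeasurable.integral_prod_right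
        (f := fun τ z => (φ (τ, z) - 1) • γ τ (r τ) z) hΨm
    have hintm : Measurable (fun q : ℝ × Z => ENNReal.ofReal (h q * |φ q - 1|)) :=
      ENNReal.measurable_ofReal.comp (hmeas.mul ((hφm.sub measurable_const).abs))
    have hae : ∀ᵐ τ ∂(volume.restrict (Set.Icc (0:ℝ) T)),
        ENNReal.ofReal ‖∫ z, (φ (τ, z) - 1) • γ τ (r τ) z ∂ν‖
          ≤ ∫⁻ z, ENNReal.ofReal (h (τ, z) * |φ (τ, z) - 1|) ∂ν := by
      filter_upwards [hγ_bdd, ae_restrict_mem measurableSet_Icc] with τ h1 h2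
      have hz : ∀ z, ‖(φ (τ, z) - 1) • γ τ (r τ) z‖ ≤ h (τ, z) * |φ (τ, z) - 1| := by
        intro z
        rw [norm_smul, Real.norm_eq_abs]
        calc |φ (τ, z) - 1| * ‖γ τ (r τ) z‖
            ≤ |φ (τ, z) - 1| * (Lγ (τ, z) * (1 + N)) := by
              refine mul_le_mul_of_nonneg_left ?_ (abs_nonneg _)
              refine le_trans (h1 (r τ) z) ?_
              refine mul_le_mul_of_nonneg_left ?_ (hLpos _)
              linarith [hrN τ h2]
          _ = h (τ, z) * |φ (τ, z) - 1| := by rw [hh]; ring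
      calc ENNReal.ofReal ‖∫ z, (φ (τ, z) - 1) • γ τ (r τ) z ∂ν‖
          ≤ ENNReal.ofReal ((∫⁻ z, ENNReal.ofReal ‖(φ (τ, z) - 1) • γ τ (r τ) z‖ ∂ν).toReal) :=
            ENNReal.ofReal_le_ofReal (norm_integral_le_lintegral_norm _)
        _ ≤ ∫⁻ z, ENNReal.ofReal ‖(φ (τ, z) - 1) • γ τ (r τ) z‖ ∂ν := ENNReal.ofReal_toReal_le
        _ ≤ ∫⁻ z, ENNReal.ofReal (h (τ, z) * |φ (τ, z) - 1|) ∂ν :=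
            lintegral_mono (fun z => ENNReal.ofReal_le_ofReal (hz z))
    have haeA : ∀ᵐ τ ∂(volume.restrict A),
        ENNReal.ofReal ‖∫ z, (φ (τ, z) - 1) • γ τ (r τ) z ∂ν‖
          ≤ ∫⁻ z, ENNReal.ofReal (h (τ, z) * |φ (τ, z) - 1|) ∂ν :=
      ae_restrict_of_ae_restrict_of_subset hAT hae
    have hIT : ∫⁻ τ in A, (∫⁻ z, ENNReal.ofReal (h (τ, z) * |φ (τ, z) - 1|) ∂ν) ∂volume
        = ∫⁻ q in A ×ˢ Set.univ, ENNReal.ofReal (h q * |φ q - 1|) ∂(nuT T ν) :=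
      (tonelli_slab' _ hintm A hA hAT).symm
    have hITfin : (∫⁻ q in A ×ˢ Set.univ,
        ENNReal.ofReal (h q * |φ q - 1|) ∂(nuT T ν)) ≠ ∞ :=
      (lt_of_le_of_lt (hCbnd φ ⟨hφm, hφpos, hφent⟩ _ (hA.prod MeasurableSet.univ))
        (lt_top_iff_ne_top.2 hCfin)).ne
    have hGle : ∫⁻ τ in A, ENNReal.ofReal ‖∫ z, (φ (τ, z) - 1) • γ τ (r τ) z ∂ν‖ ∂volume
        ≤ ∫⁻ q in A ×ˢ Set.univ, ENNReal.ofReal (h q * |φ q - 1|) ∂(nuT T ν) := by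
      rw [← hIT]
      exact lintegral_mono_ae haeA
    constructor
    · calc ‖∫ τ in A, (∫ z, (φ (τ, z) - 1) • γ τ (r τ) z ∂ν) ∂volume‖
          ≤ (∫⁻ τ in A, ENNReal.ofReal
              ‖∫ z, (φ (τ, z) - 1) • γ τ (r τ) z ∂ν‖ ∂volume).toReal :=
            norm_integral_le_lintegral_norm _
        _ ≤ _ := ENNReal.toReal_mono hITfin hGle
    · refine ⟨hGsm.aestronglyMeasurable, ?_⟩
      rw [hasFiniteIntegral_iff_norm]
      exact lt_of_le_of_lt hGle (lt_top_iff_ne_top.2 hITfin)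
  -- pointwise values lie in a fixed compact set
  have ptQ : IsCompact (closure ((fun x : H => ((innerSL ℝ x).comp i : StrongDual ℝ V)) ''
      Metric.closedBall 0 C.toReal)) := compactJ i hi_cpt C.toReal
  -- equicontinuity-type estimate
  have eq_main : ∀ ε > (0:ℝ), ∃ η > (0:ℝ), ∀ x y : Set.Icc (0:ℝ) T, dist x y < η →
      ∀ F : C(Set.Icc (0:ℝ) T, StrongDual ℝ V),
      (∃ (r : ℝ → V) (φ : ℝ × Z → ℝ),
          Measurable r ∧ (∀ t ∈ Set.Icc (0:ℝ) T, ‖i (r t)‖ ≤ N) ∧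
          φ ∈ entS (nuT T ν) Υ ∧
          ∀ t : Set.Icc (0:ℝ) T,
            F t = ((innerSL ℝ
              (∫ τ in Set.Icc (0:ℝ) (t : ℝ),
                ∫ z, (φ (τ, z) - 1) • γ τ (r τ) z ∂ν)).comp i)) →
      dist (F x) (F y) < ε := by
    intro ε hε
    set ε' : ℝ := ε / (2 * (‖i‖ + 1)) with hε'def
    have hε' : 0 < ε' := by positivity
    obtain ⟨θ, hθ, hsmall⟩ := key_small (μ := nuT T ν) h hmeas hpos δ hδ D hDdef.ge hDfin
      Υ hΥ.le ε' hε'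
    obtain ⟨η, hη, hηs⟩ := time_small (T := T) (ν := ν)
      (fun q => ENNReal.ofReal (h q ^ 2)) hsqm Hsqfin θ hθ
    refine ⟨η, hη, ?_⟩
    have core : ∀ a b : Set.Icc (0:ℝ) T, (a:ℝ) ≤ (b:ℝ) → (b:ℝ) - (a:ℝ) ≤ η →
        ∀ F : C(Set.Icc (0:ℝ) T, StrongDual ℝ V),
        (∃ (r : ℝ → V) (φ : ℝ × Z → ℝ),
            Measurable r ∧ (∀ t ∈ Set.Icc (0:ℝ) T, ‖i (r t)‖ ≤ N) ∧
            φ ∈ entS (nuT T ν) Υ ∧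
            ∀ t : Set.Icc (0:ℝ) T,
              F t = ((innerSL ℝ
                (∫ τ in Set.Icc (0:ℝ) (t : ℝ),
                  ∫ z, (φ (τ, z) - 1) • γ τ (r τ) z ∂ν)).comp i)) →
        dist (F a) (F b) < ε := by
      intro a b hab habη F hFmem
      obtain ⟨r, φ, hrm, hrN, hφ, hF⟩ := hFmem
      have hsubIcc_a : Set.Icc (0:ℝ) (a:ℝ) ⊆ Set.Icc (0:ℝ) T :=
        Set.Icc_subset_Icc le_rfl a.2.2
      have hsubIcc_b : Set.Icc (0:ℝ) (b:ℝ) ⊆ Set.Icc (0:ℝ) T :=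
        Set.Icc_subset_Icc le_rfl b.2.2
      have hsubIoc : Set.Ioc (a:ℝ) (b:ℝ) ⊆ Set.Icc (0:ℝ) T := by
        intro τ hτ
        exact ⟨le_trans a.2.1 (le_of_lt hτ.1), le_trans hτ.2 b.2.2⟩
      have hma := master r φ hrm hrN hφ (Set.Icc 0 (a:ℝ)) measurableSet_Icc hsubIcc_a
      have hmb := master r φ hrm hrN hφ (Set.Icc 0 (b:ℝ)) measurableSet_Icc hsubIcc_b
      have hmo := master r φ hrm hrN hφ (Set.Ioc (a:ℝ) (b:ℝ)) measurableSet_Ioc hsubIoc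
      -- splitting the time integral
      have hsplit : ∫ τ in Set.Icc (0:ℝ) (b:ℝ), (∫ z, (φ (τ, z) - 1) • γ τ (r τ) z ∂ν) ∂volume
          = ∫ τ in Set.Icc (0:ℝ) (a:ℝ), (∫ z, (φ (τ, z) - 1) • γ τ (r τ) z ∂ν) ∂volume
            + ∫ τ in Set.Ioc (a:ℝ) (b:ℝ), (∫ z, (φ (τ, z) - 1) • γ τ (r τ) z ∂ν) ∂volume := by
        rw [← setIntegral_union ((Set.Iic_disjoint_Ioc le_rfl).mono Set.Icc_subset_Iic_self
          le_rfl) measurableSet_Ioc hma.2 hmo.2, Set.Icc_union_Ioc_eq_Icc a.2.1 hab]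
      -- smallness of the increment
      have hsmall_int : (∫⁻ q in (Set.Ioc (a:ℝ) (b:ℝ)) ×ˢ Set.univ,
          ENNReal.ofReal (h q * |φ q - 1|) ∂(nuT T ν)) ≤ ENNReal.ofReal ε' :=
        hsmall φ hφ _ (measurableSet_Ioc.prod MeasurableSet.univ) (hηs (a:ℝ) (b:ℝ) habη)
      have hnorm_inc : ‖∫ τ in Set.Ioc (a:ℝ) (b:ℝ),
          (∫ z, (φ (τ, z) - 1) • γ τ (r τ) z ∂ν) ∂volume‖ ≤ ε' := by
        refine le_trans hmo.1 ?_
        calc (∫⁻ q in (Set.Ioc (a:ℝ) (b:ℝ)) ×ˢ Set.univ,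
              ENNReal.ofReal (h q * |φ q - 1|) ∂(nuT T ν)).toReal
            ≤ (ENNReal.ofReal ε').toReal :=
              ENNReal.toReal_mono ENNReal.ofReal_ne_top hsmall_int
          _ = ε' := ENNReal.toReal_ofReal hε'.le
      calc dist (F a) (F b) = ‖F a - F b‖ := dist_eq_norm _ _
        _ = ‖(innerSL ℝ ((∫ τ in Set.Icc (0:ℝ) (a:ℝ),
              (∫ z, (φ (τ, z) - 1) • γ τ (r τ) z ∂ν) ∂volume)
            - ∫ τ in Set.Icc (0:ℝ) (b:ℝ),
              (∫ z, (φ (τ, z) - 1) • γ τ (r τ) z ∂ν) ∂volume)).comp i‖ := by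
            rw [hF a, hF b, hJsub]
        _ ≤ ‖i‖ * ‖(∫ τ in Set.Icc (0:ℝ) (a:ℝ),
              (∫ z, (φ (τ, z) - 1) • γ τ (r τ) z ∂ν) ∂volume)
            - ∫ τ in Set.Icc (0:ℝ) (b:ℝ),
              (∫ z, (φ (τ, z) - 1) • γ τ (r τ) z ∂ν) ∂volume‖ := hJle _
        _ = ‖i‖ * ‖∫ τ in Set.Ioc (a:ℝ) (b:ℝ),
              (∫ z, (φ (τ, z) - 1) • γ τ (r τ) z ∂ν) ∂volume‖ := by
            rw [norm_sub_rev, hsplit]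
            congr 2
            abel
        _ ≤ ‖i‖ * ε' := mul_le_mul_of_nonneg_left hnorm_inc (norm_nonneg i)
        _ < ε := by
            rw [hε'def]
            have hi0 : 0 ≤ ‖i‖ := norm_nonneg i
            rw [div_eq_mul_inv]
            have : ‖i‖ * (ε * (2 * (‖i‖ + 1))⁻¹) < (‖i‖ + 1) * (ε * (2 * (‖i‖ + 1))⁻¹) := by
              have hpos2 : 0 < ε * (2 * (‖i‖ + 1))⁻¹ := by positivity
              nlinarith
            calc ‖i‖ * (ε * (2 * (‖i‖ + 1))⁻¹) < (‖i‖ + 1) * (ε * (2 * (‖i‖ + 1))⁻¹) := this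
              _ = ε / 2 := by field_simp
              _ < ε := by linarith
    intro x y hxy F hFmem
    rcases le_total (x:ℝ) (y:ℝ) with hc | hc
    · refine core x y hc ?_ F hFmem
      have : dist x y = |(x:ℝ) - (y:ℝ)| := by rw [Subtype.dist_eq, Real.dist_eq]
      rw [this] at hxy
      have := abs_lt.mp hxy
      linarith [this.1]
    · rw [dist_comm]
      refine core y x hc ?_ F hFmem
      have : dist x y = |(x:ℝ) - (y:ℝ)| := by rw [Subtype.dist_eq, Real.dist_eq]
      rw [this] at hxy
      have := abs_lt.mp hxy
      linarith [this.2]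
  -- membership of all values in the compact set
  have ptmem : ∀ F : C(Set.Icc (0:ℝ) T, StrongDual ℝ V),
      (∃ (r : ℝ → V) (φ : ℝ × Z → ℝ),
          Measurable r ∧ (∀ t ∈ Set.Icc (0:ℝ) T, ‖i (r t)‖ ≤ N) ∧
          φ ∈ entS (nuT T ν) Υ ∧
          ∀ t : Set.Icc (0:ℝ) T,
            F t = ((innerSL ℝ
              (∫ τ in Set.Icc (0:ℝ) (t : ℝ),
                ∫ z, (φ (τ, z) - 1) • γ τ (r τ) z ∂ν)).comp i)) →
      ∀ x : Set.Icc (0:ℝ) T,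
        F x ∈ closure ((fun w : H => ((innerSL ℝ w).comp i : StrongDual ℝ V)) ''
          Metric.closedBall 0 C.toReal) := by
    intro F hFmem x
    obtain ⟨r, φ, hrm, hrN, hφ, hF⟩ := hFmem
    have hsubIcc : Set.Icc (0:ℝ) (x:ℝ) ⊆ Set.Icc (0:ℝ) T :=
      Set.Icc_subset_Icc le_rfl x.2.2
    have hm := master r φ hrm hrN hφ (Set.Icc 0 (x:ℝ)) measurableSet_Icc hsubIcc
    have hwball : (∫ τ in Set.Icc (0:ℝ) (x:ℝ),
        (∫ z, (φ (τ, z) - 1) • γ τ (r τ) z ∂ν) ∂volume) ∈ Metric.closedBall (0:H) C.toReal := by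
      rw [Metric.mem_closedBall, dist_zero_right]
      refine le_trans hm.1 ?_
      exact ENNReal.toReal_mono hCfin
        (hCbnd φ hφ _ (measurableSet_Icc.prod MeasurableSet.univ))
    refine subset_closure ?_
    rw [hF x]
    exact ⟨_, hwball, rfl⟩
  -- Arzelà–Ascoli
  refine ArzelaAscoli.isCompact_closure_of_isClosedEmbedding
    (𝔖 := {K : Set (Set.Icc (0:ℝ) T) | IsCompact K})
    (F := fun f : C(Set.Icc (0:ℝ) T, StrongDual ℝ V) => ⇑f)
    (fun K hK => hK) ?_ ?_ ?_
  · refine IsClosedEmbedding.mk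
      ContinuousMap.isUniformEmbedding_toUniformOnFunIsCompact.isEmbedding ?_
    have hrange : Set.range (⇑(UniformOnFun.ofFun {K : Set (Set.Icc (0:ℝ) T) | IsCompact K})
        ∘ fun f : C(Set.Icc (0:ℝ) T, StrongDual ℝ V) => ⇑f)
        = {f : UniformOnFun (Set.Icc (0:ℝ) T) (StrongDual ℝ V)
              {K : Set (Set.Icc (0:ℝ) T) | IsCompact K} |
            Continuous (UniformOnFun.toFun _ f)} :=
      ContinuousMap.range_toUniformOnFunIsCompact
    rw [hrange]
    exact UniformOnFun.isClosed_setOf_continuous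
      CompactlyCoherentSpace.isCoherentWith
  · intro K hK
    have huec : UniformEquicontinuous (fun (f : {F : C(Set.Icc (0:ℝ) T, StrongDual ℝ V) |
        ∃ (r : ℝ → V) (φ : ℝ × Z → ℝ),
          Measurable r ∧ (∀ t ∈ Set.Icc (0:ℝ) T, ‖i (r t)‖ ≤ N) ∧
          φ ∈ entS (nuT T ν) Υ ∧
          ∀ t : Set.Icc (0:ℝ) T,
            F t = ((innerSL ℝ
              (∫ τ in Set.Icc (0:ℝ) (t : ℝ),
                ∫ z, (φ (τ, z) - 1) • γ τ (r τ) z ∂ν)).comp i)}) => ⇑(f : C(Set.Icc (0:ℝ) T,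
                  StrongDual ℝ V))) := by
      rw [Metric.uniformEquicontinuous_iff]
      intro ε hε
      obtain ⟨η, hη, hcore⟩ := eq_main ε hε
      exact ⟨η, hη, fun x y hxy f => hcore x y hxy f f.2⟩
    exact (huec.equicontinuous.equicontinuousOn K)
  · intro K hK x hx
    exact ⟨_, ptQ, fun F hF => ptmem F hF x⟩
end
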